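/- arXiv:2208.00668 — 10 statements merged into one kernel-verified Lean document; each statement's English description precedes it below -/
import Mathlib

section
/- Let f : X → X be a continuous map on a compact Hausdorff space X. Then the topological entropy of f (defined via open covers) equals sup over symmetric entourages 𝓔 of limsupₙ (1/n) log S(n,𝓔), and also equals sup over 𝓔 of limsupₙ (1/n) log R(n,𝓔), where S(n,𝓔) and R(n,𝓔) are the maximal cardinality of an (n,𝓔)-separated set and the minimal cardinality of an (n,𝓔)-covering set respectively. -/
open Set Filter Uniformity
open scoped ENNReal

variable {X : Type*}

/-- `dynN f U n` is the complexity `N(𝔘ₙ)` of the joint cover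
`𝔘ₙ = 𝔘 ∨ f⁻¹𝔘 ∨ ⋯ ∨ f⁻⁽ⁿ⁻¹⁾𝔘`. -/
noncomputable def dynN (f : X → X) (U : Finset (Set X)) (n : ℕ) : ℕ :=
  sInf {m : ℕ | ∃ c : Fin m → Fin n → Set X,
    (∀ (j : Fin m) (i : Fin n), c j i ∈ U) ∧
      (⋃ j : Fin m, ⋂ i : Fin n, f^[(i : ℕ)] ⁻¹' c j i) = Set.univ}

/-- Topological entropy defined via finite open covers. -/
noncomputable def coverEntropy [TopologicalSpace X] (f : X → X) : ℝ≥0∞ :=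
  ⨆ (U : Finset (Set X)) (_ : ∀ u ∈ U, IsOpen u) (_ : ⋃₀ (U : Set (Set X)) = Set.univ),
    Filter.limsup (fun n : ℕ => ENNReal.ofReal (Real.log (dynN f U n)) / (n : ℝ≥0∞))
      Filter.atTop

/-- A set `T` is `(n,𝓔)`-separated. -/
def IsDynSeparated (f : X → X) (E : Set (X × X)) (n : ℕ) (T : Set X) : Prop :=
  T.Pairwise fun x y => ∃ k ≤ n, (f^[k] x, f^[k] y) ∉ E

/-- A set `F` is `(n,𝓔)`-covering. -/
def IsDynCovering (f : X → X) (E : Set (X × X)) (n : ℕ) (F : Set X) : Prop :=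
  ∀ x : X, ∃ y ∈ F, ∀ k ≤ n, (f^[k] x, f^[k] y) ∈ E

/-- `S(n,𝓔)`: maximal cardinality of an `(n,𝓔)`-separated set. -/
noncomputable def dynS (f : X → X) (E : Set (X × X)) (n : ℕ) : ℕ :=
  sSup {m : ℕ | ∃ T : Finset X, IsDynSeparated f E n (T : Set X) ∧ T.card = m}

/-- `R(n,𝓔)`: minimal cardinality of an `(n,𝓔)`-covering set. -/
noncomputable def dynR (f : X → X) (E : Set (X × X)) (n : ℕ) : ℕ :=
  sInf {m : ℕ | ∃ F : Finset X, IsDynCovering f E n (F : Set X) ∧ F.card = m}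

/-! ### Auxiliary machinery -/

section Aux

/-- `ENNReal`-valued logarithm of a natural number. -/
noncomputable def elog (m : ℕ) : ℝ≥0∞ := ENNReal.ofReal (Real.log m)

lemma elog_ne_top (m : ℕ) : elog m ≠ ⊤ := ENNReal.ofReal_ne_top

lemma elog_mono : Monotone elog := by
  intro a b hab
  rcases Nat.eq_zero_or_pos a with rfl | ha
  · simp [elog]
  · exact ENNReal.ofReal_le_ofReal
      (Real.log_le_log (by exact_mod_cast ha) (by exact_mod_cast hab))

lemma elog_mul_le (a b : ℕ) : elog (a * b) ≤ elog a + elog b := by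
  simp only [elog]
  rcases Nat.eq_zero_or_pos a with rfl | ha
  · simp [elog]
  rcases Nat.eq_zero_or_pos b with rfl | hb
  · simp [elog]
  have ha1 : (1 : ℝ) ≤ a := by exact_mod_cast ha
  have hb1 : (1 : ℝ) ≤ b := by exact_mod_cast hb
  have : Real.log (a * b : ℕ) = Real.log a + Real.log b := by
    push_cast
    exact Real.log_mul (by linarith) (by linarith)
  rw [this, ENNReal.ofReal_add (Real.log_nonneg ha1) (Real.log_nonneg hb1)]

/-- The defining set for `dynN`. -/
def covSet (f : X → X) (U : Finset (Set X)) (n : ℕ) : Set ℕ :=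
  {m : ℕ | ∃ c : Fin m → Fin n → Set X,
    (∀ (j : Fin m) (i : Fin n), c j i ∈ U) ∧
      (⋃ j : Fin m, ⋂ i : Fin n, f^[(i : ℕ)] ⁻¹' c j i) = Set.univ}

lemma dynN_eq_sInf (f : X → X) (U : Finset (Set X)) (n : ℕ) :
    dynN f U n = sInf (covSet f U n) := rfl

lemma card_mem_covSet {f : X → X} {U : Finset (Set X)} {n : ℕ}
    {ι : Type*} [Fintype ι] (c : ι → Fin n → Set X)
    (hc : ∀ j i, c j i ∈ U)
    (hcov : (⋃ j, ⋂ i : Fin n, f^[(i : ℕ)] ⁻¹' c j i) = Set.univ) :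
    Fintype.card ι ∈ covSet f U n := by
  refine ⟨fun j => c ((Fintype.equivFin ι).symm j), fun j i => hc _ i, ?_⟩
  rw [← hcov]
  exact (Fintype.equivFin ι).symm.surjective.iUnion_comp
    (g := fun j => ⋂ i : Fin n, f^[(i : ℕ)] ⁻¹' c j i)

lemma dynN_le_card {f : X → X} {U : Finset (Set X)} {n : ℕ}
    {ι : Type*} [Fintype ι] (c : ι → Fin n → Set X)
    (hc : ∀ j i, c j i ∈ U)
    (hcov : (⋃ j, ⋂ i : Fin n, f^[(i : ℕ)] ⁻¹' c j i) = Set.univ) :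
    dynN f U n ≤ Fintype.card ι :=
  Nat.sInf_le (card_mem_covSet c hc hcov)

lemma covSet_nonempty {f : X → X} {U : Finset (Set X)}
    (hcov : ⋃₀ (U : Set (Set X)) = Set.univ) (n : ℕ) :
    (covSet f U n).Nonempty := by
  classical
  refine ⟨Fintype.card (Fin n → {u // u ∈ U}),
    card_mem_covSet (ι := Fin n → {u // u ∈ U})
      (fun σ i => (σ i : Set X)) (fun σ i => (σ i).2) ?_⟩
  ext x
  simp only [Set.mem_iUnion, Set.mem_iInter, Set.mem_preimage, Set.mem_univ, iff_true]
  have h : ∀ i : Fin n, ∃ u : {u // u ∈ U}, f^[(i : ℕ)] x ∈ (u : Set X) := by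
    intro i
    have hx : f^[(i : ℕ)] x ∈ ⋃₀ (U : Set (Set X)) := by rw [hcov]; trivial
    rcases hx with ⟨u, hu, hxu⟩
    exact ⟨⟨u, hu⟩, hxu⟩
  choose σ hσ using h
  exact ⟨σ, hσ⟩

lemma dynN_mem {f : X → X} {U : Finset (Set X)}
    (hcov : ⋃₀ (U : Set (Set X)) = Set.univ) (n : ℕ) :
    dynN f U n ∈ covSet f U n :=
  Nat.sInf_mem (covSet_nonempty hcov n)

/-- Subadditivity step: `N(n+1) ≤ N(n) * N(1)`. -/
lemma dynN_succ_le {f : X → X} {U : Finset (Set X)}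
    (hcov : ⋃₀ (U : Set (Set X)) = Set.univ) (n : ℕ) :
    dynN f U (n + 1) ≤ dynN f U n * dynN f U 1 := by
  classical
  obtain ⟨c, hc, hccov⟩ := dynN_mem (f := f) hcov n
  obtain ⟨d, hd, hdcov⟩ := dynN_mem (f := f) hcov 1
  have key : dynN f U (n + 1) ≤ Fintype.card (Fin (dynN f U n) × Fin (dynN f U 1)) := by
    refine dynN_le_card
      (fun p i => if h : (i : ℕ) < n then c p.1 ⟨i, h⟩ else d p.2 0) ?_ ?_
    · intro p i
      by_cases h : (i : ℕ) < n
      · rw [dif_pos h]; exact hc p.1 ⟨i, h⟩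
      · rw [dif_neg h]; exact hd p.2 0
    · ext x
      simp only [Set.mem_iUnion, Set.mem_iInter, Set.mem_preimage, Set.mem_univ, iff_true]
      have hx1 : x ∈ ⋃ j, ⋂ i : Fin n, f^[(i : ℕ)] ⁻¹' c j i := by
        rw [hccov]; trivial
      have hx2 : f^[n] x ∈ ⋃ j, ⋂ i : Fin 1, f^[(i : ℕ)] ⁻¹' d j i := by
        rw [hdcov]; trivial
      obtain ⟨j1, hj1⟩ := Set.mem_iUnion.1 hx1
      obtain ⟨j2, hj2⟩ := Set.mem_iUnion.1 hx2
      refine ⟨⟨j1, j2⟩, fun i => ?_⟩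
      dsimp only
      by_cases h : (i : ℕ) < n
      · rw [dif_pos h]
        have := Set.mem_iInter.1 hj1 ⟨i, h⟩
        simpa using this
      · have hieq : (i : ℕ) = n := Nat.le_antisymm (Nat.lt_succ_iff.1 i.2) (Nat.le_of_not_lt h)
        have h2 := Set.mem_iInter.1 hj2 0
        simp only [Fin.val_zero, Function.iterate_zero, id_eq] at h2
        rw [dif_neg h, hieq]
        exact h2
  simpa using key

/-- Existence of a finite open cover with `E`-small members. -/
lemma exists_small_cover [UniformSpace X] [CompactSpace X]
    {E : Set (X × X)} (hE : E ∈ 𝓤 X) :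
    ∃ U : Finset (Set X), (∀ u ∈ U, IsOpen u) ∧ ⋃₀ (U : Set (Set X)) = Set.univ ∧
      ∀ u ∈ U, ∀ x ∈ u, ∀ y ∈ u, (x, y) ∈ E := by
  classical
  obtain ⟨D, hD, hDsymm, hDE⟩ := comp_symm_mem_uniformity_sets hE
  obtain ⟨W, ⟨hW, hWopen⟩, hWD⟩ := uniformity_hasBasis_open.mem_iff.1 hD
  have hballs : (Set.univ : Set X) ⊆ ⋃ x : X, UniformSpace.ball x W := fun x _ =>
    Set.mem_iUnion.2 ⟨x, refl_mem_uniformity hW⟩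
  obtain ⟨t, ht⟩ := isCompact_univ.elim_finite_subcover
    (fun x : X => UniformSpace.ball x W) (fun x => UniformSpace.isOpen_ball x hWopen) hballs
  refine ⟨t.image (fun x => UniformSpace.ball x W), ?_, ?_, ?_⟩
  · intro u hu
    obtain ⟨x, _, rfl⟩ := Finset.mem_image.1 hu
    exact UniformSpace.isOpen_ball x hWopen
  · apply Set.eq_univ_of_univ_subset
    intro x hx
    obtain ⟨y, hyt, hxy⟩ := Set.mem_iUnion₂.1 (ht hx)
    exact ⟨UniformSpace.ball y W, by
      simpa using Finset.mem_image_of_mem (fun x => UniformSpace.ball x W) hyt, hxy⟩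
  · intro u hu x hx y hy
    obtain ⟨z, _, rfl⟩ := Finset.mem_image.1 hu
    have h1 : (z, x) ∈ D := hWD hx
    have h2 : (z, y) ∈ D := hWD hy
    exact hDE ⟨z, hDsymm.symm _ _ h1, h2⟩

/-- Any `(n,E)`-separated finite set has cardinality at most `N(𝔘, n+1)`
when every member of `𝔘` is `E`-small. -/
lemma card_le_dynN {f : X → X} {U : Finset (Set X)} {E : Set (X × X)} {n : ℕ}
    (hcov : ⋃₀ (U : Set (Set X)) = Set.univ)
    (hsmall : ∀ u ∈ U, ∀ x ∈ u, ∀ y ∈ u, (x, y) ∈ E)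
    {T : Finset X} (hT : IsDynSeparated f E n (T : Set X)) :
    T.card ≤ dynN f U (n + 1) := by
  classical
  obtain ⟨c, hc, hccov⟩ := dynN_mem (f := f) hcov (n + 1)
  have hx : ∀ x : X, ∃ j : Fin (dynN f U (n + 1)),
      x ∈ ⋂ i : Fin (n + 1), f^[(i : ℕ)] ⁻¹' c j i := by
    intro x
    have : x ∈ ⋃ j, ⋂ i : Fin (n + 1), f^[(i : ℕ)] ⁻¹' c j i := by rw [hccov]; trivial
    exact Set.mem_iUnion.1 this
  choose g hg using hx
  have hinj : Set.InjOn g (T : Set X) := by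
    intro x hxT y hyT hxy
    by_contra hne
    obtain ⟨k, hk, hkE⟩ := hT hxT hyT hne
    have hxk : f^[k] x ∈ c (g x) ⟨k, Nat.lt_succ_of_le hk⟩ := by
      have := Set.mem_iInter.1 (hg x) ⟨k, Nat.lt_succ_of_le hk⟩
      simpa using this
    have hyk : f^[k] y ∈ c (g x) ⟨k, Nat.lt_succ_of_le hk⟩ := by
      have := Set.mem_iInter.1 (hg y) ⟨k, Nat.lt_succ_of_le hk⟩
      rw [hxy]
      simpa using this
    exact hkE (hsmall _ (hc (g x) ⟨k, Nat.lt_succ_of_le hk⟩) _ hxk _ hyk)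
  calc T.card ≤ (Finset.univ : Finset (Fin (dynN f U (n + 1)))).card :=
        Finset.card_le_card_of_injOn g (fun x _ => Finset.mem_univ _) (by
          intro x hxT y hyT; exact hinj (by exact_mod_cast hxT) (by exact_mod_cast hyT))
    _ = dynN f U (n + 1) := by simp

lemma dynS_le_dynN {f : X → X} {U : Finset (Set X)} {E : Set (X × X)} {n : ℕ}
    (hcov : ⋃₀ (U : Set (Set X)) = Set.univ)
    (hsmall : ∀ u ∈ U, ∀ x ∈ u, ∀ y ∈ u, (x, y) ∈ E) :
    dynS f E n ≤ dynN f U (n + 1) := by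
  apply csSup_le
  · exact ⟨0, ∅, by simp [IsDynSeparated]⟩
  · rintro m ⟨T, hT, rfl⟩
    exact card_le_dynN hcov hsmall hT

/-- A maximal `(n,E)`-separated set exists and is `(n,E)`-covering. -/
lemma exists_max_separated [UniformSpace X] [CompactSpace X]
    {f : X → X} {E : Set (X × X)} (hE : E ∈ 𝓤 X) (hsymm : SetRel.IsSymm E) (n : ℕ) :
    ∃ T : Finset X, IsDynSeparated f E n (T : Set X) ∧ T.card = dynS f E n ∧
      IsDynCovering f E n (T : Set X) := by
  classical
  obtain ⟨U, hUopen, hUcov, hUsmall⟩ := exists_small_cover hE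
  have hbdd : BddAbove {m : ℕ | ∃ T : Finset X,
      IsDynSeparated f E n (T : Set X) ∧ T.card = m} := by
    refine ⟨dynN f U (n + 1), ?_⟩
    rintro m ⟨T, hT, rfl⟩
    exact card_le_dynN hUcov hUsmall hT
  have hne : {m : ℕ | ∃ T : Finset X,
      IsDynSeparated f E n (T : Set X) ∧ T.card = m}.Nonempty :=
    ⟨0, ∅, by simp [IsDynSeparated]⟩
  obtain ⟨T, hT, hTcard⟩ := Nat.sSup_mem hne hbdd
  refine ⟨T, hT, hTcard, ?_⟩
  intro x
  by_cases hxT : x ∈ T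
  · exact ⟨x, hxT, fun k _ => refl_mem_uniformity hE⟩
  by_contra hcon
  push_neg at hcon
  have hrs : Symmetric fun a b : X => ∃ k ≤ n, (f^[k] a, f^[k] b) ∉ E := by
    rintro a b ⟨k, hk, hke⟩
    exact ⟨k, hk, fun h => hke (hsymm.symm _ _ h)⟩
  have hsep : IsDynSeparated f E n ((insert x T : Finset X) : Set X) := by
    rw [Finset.coe_insert]
    exact (haveI : Std.Symm (fun a b : X => ∃ k ≤ n, (f^[k] a, f^[k] b) ∉ E) := ⟨hrs⟩; Set.pairwise_insert_of_symm).2 ⟨hT, fun y hyT _ => hcon y hyT⟩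
  have hle : (insert x T).card ≤ dynS f E n :=
    le_csSup hbdd ⟨insert x T, hsep, rfl⟩
  rw [Finset.card_insert_of_notMem hxT, hTcard] at hle
  exact Nat.not_succ_le_self _ hle

lemma dynR_le_dynS [UniformSpace X] [CompactSpace X]
    {f : X → X} {E : Set (X × X)} (hE : E ∈ 𝓤 X) (hsymm : SetRel.IsSymm E) (n : ℕ) :
    dynR f E n ≤ dynS f E n := by
  obtain ⟨T, _, hTcard, hTcov⟩ := exists_max_separated (f := f) hE hsymm n
  calc dynR f E n ≤ T.card := Nat.sInf_le ⟨T, hTcov, rfl⟩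
    _ = dynS f E n := hTcard

/-- Lebesgue-number argument: for a finite open cover `U`, there is a symmetric entourage
such that `N(𝔘, n+1) ≤ R(n, E)` for all `n`. -/
lemma exists_entourage_dynN_le [UniformSpace X] [CompactSpace X]
    {f : X → X} {U : Finset (Set X)}
    (hUopen : ∀ u ∈ U, IsOpen u) (hUcov : ⋃₀ (U : Set (Set X)) = Set.univ) :
    ∃ E ∈ 𝓤 X, SetRel.IsSymm E ∧ ∀ n, dynN f U (n + 1) ≤ dynR f E n := by
  classical
  obtain ⟨V, hV, hleb⟩ := lebesgue_number_lemma (U := fun u : {u // u ∈ U} => (u : Set X))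
    isCompact_univ (fun u => hUopen u u.2)
    (by intro x _
        have hx : x ∈ ⋃₀ (U : Set (Set X)) := by rw [hUcov]; trivial
        obtain ⟨u, hu, hxu⟩ := hx
        exact Set.mem_iUnion.2 ⟨⟨u, hu⟩, hxu⟩)
  set E := SetRel.symmetrize V with hEdef
  have hE : E ∈ 𝓤 X := symmetrize_mem_uniformity hV
  have hEsymm : SetRel.IsSymm E := SetRel.isSymm_symmetrize (R := V)
  have hEV : E ⊆ V := SetRel.symmetrize_subset_self (R := V)
  refine ⟨E, hE, hEsymm, fun n => ?_⟩
  -- take a minimal (n,E)-covering set F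
  have hRne : {m : ℕ | ∃ F : Finset X, IsDynCovering f E n (F : Set X) ∧ F.card = m}.Nonempty := by
    obtain ⟨T, _, _, hTcov⟩ := exists_max_separated (f := f) hE hEsymm n
    exact ⟨T.card, T, hTcov, rfl⟩
  obtain ⟨F, hFcov, hFcard⟩ := Nat.sInf_mem hRne
  -- for each y in F and each time i, choose a cover member containing the V-ball
  have hch : ∀ (y : {y // y ∈ F}) (i : Fin (n + 1)),
      ∃ u ∈ U, UniformSpace.ball (f^[(i : ℕ)] (y : X)) V ⊆ u := by
    intro y i
    obtain ⟨u, hu⟩ := hleb (f^[(i : ℕ)] (y : X)) trivial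
    exact ⟨u, u.2, hu⟩
  choose u hu hball using hch
  have key : dynN f U (n + 1) ≤ Fintype.card {y // y ∈ F} := by
    refine dynN_le_card (ι := {y // y ∈ F}) u hu ?_
    ext x
    simp only [Set.mem_iUnion, Set.mem_iInter, Set.mem_preimage, Set.mem_univ, iff_true]
    obtain ⟨y, hyF, hy⟩ := hFcov x
    refine ⟨⟨y, hyF⟩, fun i => ?_⟩
    apply hball ⟨y, hyF⟩ i
    have : (f^[(i : ℕ)] x, f^[(i : ℕ)] y) ∈ E := hy (i : ℕ) (Nat.lt_succ_iff.1 i.2)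
    exact hEV (hEsymm.symm _ _ this)
  calc dynN f U (n + 1) ≤ Fintype.card {y // y ∈ F} := key
    _ = F.card := Fintype.card_coe F
    _ = dynR f E n := hFcard

/-! ### Limsup lemmas -/

lemma limsup_add_div_le (a : ℕ → ℝ≥0∞) (C : ℝ≥0∞) (hC : C ≠ ⊤) :
    Filter.limsup (fun n : ℕ => a n + C / (n : ℝ≥0∞)) Filter.atTop ≤
      Filter.limsup a Filter.atTop := by
  set L := Filter.limsup a Filter.atTop with hL
  rcases eq_or_ne L ⊤ with htop | hfin
  · rw [htop]; exact le_top
  refine ENNReal.le_of_forall_pos_le_add fun ε hε _ => ?_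
  have hε2 : (0 : ℝ≥0∞) < (ε : ℝ≥0∞) / 2 :=
    ENNReal.div_pos (by exact_mod_cast hε.ne') (by norm_num)
  have htend : Filter.Tendsto (fun n : ℕ => C / (n : ℝ≥0∞)) Filter.atTop (nhds 0) := by
    have h1 : Filter.Tendsto (fun n : ℕ => (n : ℝ≥0∞)⁻¹) Filter.atTop (nhds 0) :=
      ENNReal.tendsto_inv_nat_nhds_zero
    have h2 := ENNReal.Tendsto.const_mul h1 (Or.inr hC)
    simpa [div_eq_mul_inv] using h2
  have hev1 : ∀ᶠ n : ℕ in Filter.atTop, C / (n : ℝ≥0∞) < (ε : ℝ≥0∞) / 2 :=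
    htend.eventually_lt_const hε2
  have hlt : sInf {c : ℝ≥0∞ | ∀ᶠ n in Filter.atTop, a n ≤ c} < L + (ε : ℝ≥0∞) / 2 := by
    rw [← Filter.limsup_eq]
    exact ENNReal.lt_add_right hfin hε2.ne'
  obtain ⟨b, hb, hbL⟩ := sInf_lt_iff.1 hlt
  have hev : ∀ᶠ n : ℕ in Filter.atTop, a n + C / (n : ℝ≥0∞) ≤ b + (ε : ℝ≥0∞) / 2 := by
    filter_upwards [hb, hev1] with n h1 h2
    exact add_le_add h1 h2.le
  calc Filter.limsup (fun n : ℕ => a n + C / (n : ℝ≥0∞)) Filter.atTop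
      ≤ b + (ε : ℝ≥0∞) / 2 := Filter.limsup_le_of_le (by isBoundedDefault) hev
    _ ≤ (L + (ε : ℝ≥0∞) / 2) + (ε : ℝ≥0∞) / 2 := add_le_add_left hbL.le _
    _ = L + (ε : ℝ≥0∞) := by rw [add_assoc, ENNReal.add_halves]

end Aux

section Main

variable [UniformSpace X] [CompactSpace X]

lemma limsup_S_le_coverEntropy (f : X → X) {E : Set (X × X)} (hE : E ∈ 𝓤 X) :
    Filter.limsup (fun n : ℕ => ENNReal.ofReal (Real.log (dynS f E n)) / (n : ℝ≥0∞))
      Filter.atTop ≤ coverEntropy f := by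
  obtain ⟨U, hUopen, hUcov, hUsmall⟩ := exists_small_cover hE
  have hpt : ∀ n : ℕ, ENNReal.ofReal (Real.log (dynS f E n)) / (n : ℝ≥0∞) ≤
      elog (dynN f U n) / (n : ℝ≥0∞) + elog (dynN f U 1) / (n : ℝ≥0∞) := by
    intro n
    have h1 : elog (dynS f E n) ≤ elog (dynN f U (n + 1)) :=
      elog_mono (dynS_le_dynN hUcov hUsmall)
    have h2 : elog (dynN f U (n + 1)) ≤ elog (dynN f U n) + elog (dynN f U 1) :=
      (elog_mono (dynN_succ_le hUcov n)).trans (elog_mul_le _ _)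
    calc ENNReal.ofReal (Real.log (dynS f E n)) / (n : ℝ≥0∞)
        ≤ (elog (dynN f U n) + elog (dynN f U 1)) / (n : ℝ≥0∞) :=
          ENNReal.div_le_div (h1.trans h2) le_rfl
      _ = elog (dynN f U n) / (n : ℝ≥0∞) + elog (dynN f U 1) / (n : ℝ≥0∞) :=
          ENNReal.add_div
  calc Filter.limsup (fun n : ℕ => ENNReal.ofReal (Real.log (dynS f E n)) / (n : ℝ≥0∞))
        Filter.atTop
      ≤ Filter.limsup
          (fun n : ℕ => elog (dynN f U n) / (n : ℝ≥0∞) + elog (dynN f U 1) / (n : ℝ≥0∞))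
          Filter.atTop := Filter.limsup_le_limsup (Filter.Eventually.of_forall hpt)
    _ ≤ Filter.limsup (fun n : ℕ => elog (dynN f U n) / (n : ℝ≥0∞)) Filter.atTop :=
        limsup_add_div_le _ _ (elog_ne_top _)
    _ ≤ coverEntropy f := by
        unfold coverEntropy
        exact le_iSup_of_le U (le_iSup_of_le hUopen (le_iSup_of_le hUcov le_rfl))

lemma coverEntropy_term_le (f : X → X) {U : Finset (Set X)}
    (hUopen : ∀ u ∈ U, IsOpen u) (hUcov : ⋃₀ (U : Set (Set X)) = Set.univ) :
    Filter.limsup (fun n : ℕ => ENNReal.ofReal (Real.log (dynN f U n)) / (n : ℝ≥0∞))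
        Filter.atTop ≤
      ⨆ (E : Set (X × X)) (_ : E ∈ 𝓤 X) (_ : SetRel.IsSymm E),
        Filter.limsup (fun n : ℕ => ENNReal.ofReal (Real.log (dynR f E n)) / (n : ℝ≥0∞))
          Filter.atTop := by
  obtain ⟨E, hE, hEsymm, hle⟩ := exists_entourage_dynN_le (f := f) hUopen hUcov
  have key : Filter.limsup (fun n : ℕ => elog (dynN f U n) / (n : ℝ≥0∞)) Filter.atTop ≤
      Filter.limsup (fun n : ℕ => elog (dynR f E n) / (n : ℝ≥0∞)) Filter.atTop := by
    rw [← Filter.limsup_nat_add (fun n : ℕ => elog (dynN f U n) / (n : ℝ≥0∞)) 1]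
    refine Filter.limsup_le_limsup (Filter.Eventually.of_forall fun n => ?_)
    calc elog (dynN f U (n + 1)) / ((n + 1 : ℕ) : ℝ≥0∞)
        ≤ elog (dynR f E n) / ((n + 1 : ℕ) : ℝ≥0∞) :=
          ENNReal.div_le_div (elog_mono (hle n)) le_rfl
      _ ≤ elog (dynR f E n) / (n : ℝ≥0∞) :=
          ENNReal.div_le_div le_rfl (by exact_mod_cast Nat.le_succ n)
  exact key.trans (le_iSup_of_le E (le_iSup_of_le hE (le_iSup_of_le hEsymm le_rfl)))

lemma limsup_R_le_limsup_S (f : X → X) {E : Set (X × X)}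
    (hE : E ∈ 𝓤 X) (hEsymm : SetRel.IsSymm E) :
    Filter.limsup (fun n : ℕ => ENNReal.ofReal (Real.log (dynR f E n)) / (n : ℝ≥0∞))
        Filter.atTop ≤
      Filter.limsup (fun n : ℕ => ENNReal.ofReal (Real.log (dynS f E n)) / (n : ℝ≥0∞))
        Filter.atTop :=
  Filter.limsup_le_limsup (Filter.Eventually.of_forall fun n =>
    ENNReal.div_le_div (elog_mono (dynR_le_dynS hE hEsymm n)) le_rfl)

end Main

/-- On a compact Hausdorff space the cover entropy equals the entropy computed with
`(n,𝓔)`-separated sets, and also with `(n,𝓔)`-covering sets, taking the supremum over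
symmetric entourages `𝓔` of the canonical uniform structure. -/
theorem stmt3 [UniformSpace X] [CompactSpace X] [T2Space X]
    (f : X → X) (hf : Continuous f) :
    (coverEntropy f =
      ⨆ (E : Set (X × X)) (_ : E ∈ 𝓤 X) (_ : SetRel.IsSymm E),
        Filter.limsup (fun n : ℕ => ENNReal.ofReal (Real.log (dynS f E n)) / (n : ℝ≥0∞))
          Filter.atTop) ∧
    (coverEntropy f =
      ⨆ (E : Set (X × X)) (_ : E ∈ 𝓤 X) (_ : SetRel.IsSymm E),
        Filter.limsup (fun n : ℕ => ENNReal.ofReal (Real.log (dynR f E n)) / (n : ℝ≥0∞))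
          Filter.atTop) := by
  have hSle : (⨆ (E : Set (X × X)) (_ : E ∈ 𝓤 X) (_ : SetRel.IsSymm E),
      Filter.limsup (fun n : ℕ => ENNReal.ofReal (Real.log (dynS f E n)) / (n : ℝ≥0∞))
        Filter.atTop) ≤ coverEntropy f :=
    iSup_le fun E => iSup_le fun hE => iSup_le fun _ => limsup_S_le_coverEntropy f hE
  have hNleR : coverEntropy f ≤ ⨆ (E : Set (X × X)) (_ : E ∈ 𝓤 X) (_ : SetRel.IsSymm E),
      Filter.limsup (fun n : ℕ => ENNReal.ofReal (Real.log (dynR f E n)) / (n : ℝ≥0∞))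
        Filter.atTop := by
    unfold coverEntropy
    exact iSup_le fun U => iSup_le fun hUopen => iSup_le fun hUcov =>
      coverEntropy_term_le f hUopen hUcov
  have hRleS : (⨆ (E : Set (X × X)) (_ : E ∈ 𝓤 X) (_ : SetRel.IsSymm E),
      Filter.limsup (fun n : ℕ => ENNReal.ofReal (Real.log (dynR f E n)) / (n : ℝ≥0∞))
        Filter.atTop) ≤
      ⨆ (E : Set (X × X)) (_ : E ∈ 𝓤 X) (_ : SetRel.IsSymm E),
        Filter.limsup (fun n : ℕ => ENNReal.ofReal (Real.log (dynS f E n)) / (n : ℝ≥0∞))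
          Filter.atTop :=
    iSup_le fun E => iSup_le fun hE => iSup_le fun hsymm =>
      le_iSup_of_le E (le_iSup_of_le hE (le_iSup_of_le hsymm
        (limsup_R_le_limsup_S f hE hsymm)))
  exact ⟨le_antisymm (hNleR.trans hRleS) hSle,
    le_antisymm hNleR (hRleS.trans hSle)⟩
end

section
/- Let X be a quasi-compact Noetherian topological space and f : X → X a continuous map. Then for any finite open cover 𝔘 of X and any ε > 0, there exists C > 0 such that N(𝔘 ∨ f⁻¹𝔘 ∨ ⋯ ∨ f⁻⁽ⁿ⁻¹⁾𝔘) ≤ C(1+ε)ⁿ for all n. In particular the topological entropy of f is 0. -/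
open Set Filter
open scoped ENNReal Classical

variable {X : Type*}

/-! ### Auxiliary machinery -/

/-- The times in `B` can be independently prescribed for visits of orbits to `A`. -/
def ShatterTimes (f : X → X) (A : Set X) (B : Finset ℕ) : Prop :=
  ∀ H ⊆ B, ∃ x : X, ∀ i ∈ B, (f^[i] x ∈ A ↔ i ∈ H)

/-- The family of length-`n` visit patterns (traces) of orbits to `A`. -/
noncomputable def traceFam (f : X → X) (A : Set X) (n : ℕ) : Finset (Finset (Fin n)) :=
  (Set.toFinite (Set.range fun x : X =>
    Finset.univ.filter fun i : Fin n => f^[(i : ℕ)] x ∈ A)).toFinset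

lemma shatterTimes_subset {f : X → X} {A : Set X} {B B' : Finset ℕ}
    (h : ShatterTimes f A B) (hBB : B' ⊆ B) : ShatterTimes f A B' := by
  intro H hH
  obtain ⟨x, hx⟩ := h H (hH.trans hBB)
  exact ⟨x, fun i hi => hx i (hBB hi)⟩

lemma shatterTimes_translate {f : X → X} {A : Set X} {B : Finset ℕ} {t : ℕ}
    (h : ShatterTimes f A B) (ht : ∀ i ∈ B, t ≤ i) :
    ShatterTimes f A (B.image (· - t)) := by
  intro H hH
  obtain ⟨x, hx⟩ := h (B.filter (fun i => i - t ∈ H)) (Finset.filter_subset _ _)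
  refine ⟨f^[t] x, ?_⟩
  intro i hi
  obtain ⟨g, hg, rfl⟩ := Finset.mem_image.1 hi
  rw [← Function.iterate_add_apply]
  have hgt : g - t + t = g := Nat.sub_add_cancel (ht g hg)
  rw [hgt]
  constructor
  · intro hAx
    exact (Finset.mem_filter.1 ((hx g hg).1 hAx)).2
  · intro hH'
    exact (hx g hg).2 (Finset.mem_filter.2 ⟨hg, hH'⟩)

lemma shatterTimes_of_shatters {f : X → X} {A : Set X} {n : ℕ} {s : Finset (Fin n)}
    (h : (traceFam f A n).Shatters s) : ShatterTimes f A (s.image Fin.val) := by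
  intro H hH
  obtain ⟨u, hu, hsu⟩ := h (Finset.filter_subset (fun i : Fin n => (i : ℕ) ∈ H) s)
  rw [traceFam, Set.Finite.mem_toFinset] at hu
  obtain ⟨x, rfl⟩ := hu
  refine ⟨x, ?_⟩
  intro i hi
  obtain ⟨i', hi', rfl⟩ := Finset.mem_image.1 hi
  constructor
  · intro hAx
    have hmem : i' ∈ s ∩ (Finset.univ.filter fun i : Fin n => f^[(i : ℕ)] x ∈ A) :=
      Finset.mem_inter.2 ⟨hi', Finset.mem_filter.2 ⟨Finset.mem_univ _, hAx⟩⟩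
    rw [hsu] at hmem
    exact (Finset.mem_filter.1 hmem).2
  · intro hiH
    have hmem : i' ∈ s ∩ (Finset.univ.filter fun i : Fin n => f^[(i : ℕ)] x ∈ A) := by
      rw [hsu]; exact Finset.mem_filter.2 ⟨hi', hiH⟩
    exact (Finset.mem_filter.1 (Finset.mem_inter.1 hmem).2).2

lemma exists_big_shattered {f : X → X} {A : Set X} {n d : ℕ}
    (h : ∑ j ∈ Finset.range d, n.choose j < (traceFam f A n).card) :
    ∃ s : Finset (Fin n), (traceFam f A n).Shatters s ∧ d ≤ s.card := by
  by_contra hs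
  push_neg at hs
  have h1 : (traceFam f A n).card ≤ (traceFam f A n).shatterer.card :=
    Finset.card_le_card_shatterer _
  have h2 : (traceFam f A n).shatterer ⊆
      (Finset.univ : Finset (Finset (Fin n))).filter (fun s => s.card < d) := by
    intro s hsmem
    rw [Finset.mem_shatterer] at hsmem
    exact Finset.mem_filter.2 ⟨Finset.mem_univ _, hs s hsmem⟩
  have h3 : ((Finset.univ : Finset (Finset (Fin n))).filter (fun s => s.card < d))
      = (Finset.range d).biUnion (fun j => Finset.powersetCard j (Finset.univ : Finset (Fin n))) := by
    ext s
    simp only [Finset.mem_filter, Finset.mem_univ, true_and, Finset.mem_biUnion,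
      Finset.mem_range, Finset.mem_powersetCard]
    constructor
    · intro hlt; exact ⟨s.card, hlt, Finset.subset_univ _, rfl⟩
    · rintro ⟨j, hj, -, rfl⟩; exact hj
  have h4 : ((Finset.univ : Finset (Finset (Fin n))).filter (fun s => s.card < d)).card
      = ∑ j ∈ Finset.range d, n.choose j := by
    rw [h3, Finset.card_biUnion]
    · refine Finset.sum_congr rfl fun j _ => ?_
      rw [Finset.card_powersetCard, Finset.card_univ, Fintype.card_fin]
    · intro a _ b _ hab
      simp only [Finset.disjoint_left, Finset.mem_powersetCard]
      rintro s ⟨-, rfl⟩ ⟨-, h'⟩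
      exact hab h'
  have := h1.trans (Finset.card_le_card h2)
  rw [h4] at this
  omega

lemma block_selection (G : Finset ℕ) (n C0 k : ℕ) (hC0 : 1 ≤ C0)
    (hGn : ∀ g ∈ G, g < n) (hdens : 2 * n ≤ C0 * G.card) (hkn : C0 * (k + 1) ≤ n) :
    ∃ g0, ∃ b : Fin k → ℕ, StrictMono b ∧ (∀ j : Fin k, b j < C0 * ((j : ℕ) + 1)) ∧
      (∀ j : Fin k, g0 + b j ∈ G) := by
  have hn : 1 ≤ n := le_trans (by nlinarith) hkn
  have hGne : G.Nonempty := by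
    rcases Finset.eq_empty_or_nonempty G with rfl | h
    · simp only [Finset.card_empty, Nat.mul_zero] at hdens; omega
    · exact h
  obtain ⟨g0, hg0G, hg0max⟩ := Finset.exists_max_image G
    (fun g => (C0 : ℤ) * ((G.filter (fun h => g ≤ h)).card : ℤ) - ((n : ℤ) - g)) hGne
  have hg0n : g0 < n := hGn g0 hg0G
  have hcount : ∀ m : ℕ, m ≤ n →
      (m : ℤ) ≤ (C0 : ℤ) * ((G.filter (fun h => g0 ≤ h ∧ h < g0 + m)).card : ℤ) := by
    intro m hm
    rcases Finset.eq_empty_or_nonempty (G.filter (fun h => g0 + m ≤ h)) with hT | hT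
    · have hmid : G.filter (fun h => g0 ≤ h ∧ h < g0 + m) = G.filter (fun h => g0 ≤ h) := by
        apply Finset.filter_congr
        intro h hh
        have hne : ¬ (g0 + m ≤ h) := by
          intro hle
          have : h ∈ G.filter (fun h => g0 + m ≤ h) := Finset.mem_filter.2 ⟨hh, hle⟩
          simp [hT] at this
        constructor
        · rintro ⟨h1, -⟩; exact h1
        · intro h1; exact ⟨h1, by omega⟩
      set gmin := G.min' hGne with hgmin
      have hminG : gmin ∈ G := G.min'_mem hGne
      have hfull : G.filter (fun h => gmin ≤ h) = G := by
        apply Finset.filter_true_of_mem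
        intro h hh
        exact G.min'_le h hh
      have h1 := hg0max gmin hminG
      rw [hfull] at h1
      have h2 : (2 * n : ℤ) ≤ (C0 : ℤ) * (G.card : ℤ) := by exact_mod_cast hdens
      have hgmnn : (0:ℤ) ≤ (gmin : ℤ) := by positivity
      have hg0le : (g0 : ℤ) ≤ (n : ℤ) := by exact_mod_cast hg0n.le
      have hmn : (m : ℤ) ≤ (n : ℤ) := by exact_mod_cast hm
      rw [hmid]
      omega
    · set g1 := (G.filter (fun h => g0 + m ≤ h)).min' hT with hg1def
      have hg1mem := (G.filter (fun h => g0 + m ≤ h)).min'_mem hT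
      have hg1G : g1 ∈ G := (Finset.mem_filter.1 hg1mem).1
      have hg1ge : g0 + m ≤ g1 := (Finset.mem_filter.1 hg1mem).2
      have hg1min : ∀ h ∈ G, g0 + m ≤ h → g1 ≤ h := by
        intro h hh hle
        exact (G.filter (fun h => g0 + m ≤ h)).min'_le h (Finset.mem_filter.2 ⟨hh, hle⟩)
      have hpart : G.filter (fun h => g0 ≤ h) =
          (G.filter (fun h => g0 ≤ h ∧ h < g0 + m)) ∪ (G.filter (fun h => g1 ≤ h)) := by
        ext h
        simp only [Finset.mem_filter, Finset.mem_union]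
        constructor
        · rintro ⟨hh, hg0h⟩
          by_cases hcase : h < g0 + m
          · exact Or.inl ⟨hh, hg0h, hcase⟩
          · exact Or.inr ⟨hh, hg1min h hh (by omega)⟩
        · rintro (⟨hh, hg0h, -⟩ | ⟨hh, hg1h⟩)
          · exact ⟨hh, hg0h⟩
          · exact ⟨hh, by omega⟩
      have hdisj : Disjoint (G.filter (fun h => g0 ≤ h ∧ h < g0 + m))
          (G.filter (fun h => g1 ≤ h)) := by
        rw [Finset.disjoint_left]
        intro h h1 h2
        have := (Finset.mem_filter.1 h1).2
        have := (Finset.mem_filter.1 h2).2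
        omega
      have hcards : (G.filter (fun h => g0 ≤ h)).card =
          (G.filter (fun h => g0 ≤ h ∧ h < g0 + m)).card + (G.filter (fun h => g1 ≤ h)).card := by
        rw [hpart, Finset.card_union_of_disjoint hdisj]
      have h1 := hg0max g1 hg1G
      rw [hcards] at h1
      have hg1n : (g1 : ℤ) ≤ n := by exact_mod_cast (hGn g1 hg1G).le
      have hge : (g0 : ℤ) + m ≤ g1 := by exact_mod_cast hg1ge
      push_cast at h1 ⊢
      rw [mul_add] at h1
      omega
  set S := (G.filter (fun h => g0 ≤ h)).image (fun h => h - g0) with hSdef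
  have hScount : ∀ j : ℕ, j + 1 ≤ k → j + 1 ≤ (S.filter (fun t => t < C0 * (j + 1))).card := by
    intro j hj
    have hmlen : C0 * (j + 1) ≤ n := le_trans (by nlinarith) hkn
    have hc := hcount (C0 * (j + 1)) hmlen
    have himg : S.filter (fun t => t < C0 * (j + 1)) =
        (G.filter (fun h => g0 ≤ h ∧ h < g0 + C0 * (j + 1))).image (fun h => h - g0) := by
      ext t
      simp only [hSdef, Finset.mem_filter, Finset.mem_image]
      constructor
      · rintro ⟨⟨h, hh, rfl⟩, hlt⟩
        obtain ⟨hhG, hhge⟩ := hh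
        exact ⟨h, ⟨hhG, hhge, by omega⟩, rfl⟩
      · rintro ⟨h, ⟨hhG, hhge, hhlt⟩, rfl⟩
        exact ⟨⟨h, ⟨hhG, hhge⟩, rfl⟩, by omega⟩
    have hinj : Set.InjOn (fun h => h - g0)
        ↑(G.filter (fun h => g0 ≤ h ∧ h < g0 + C0 * (j + 1))) := by
      intro a ha b hb hab
      have ha' := (Finset.mem_filter.1 ha).2
      have hb' := (Finset.mem_filter.1 hb).2
      simp only at hab
      omega
    rw [himg, Finset.card_image_of_injOn hinj]
    have hC0pos : (0:ℤ) < (C0:ℤ) := by exact_mod_cast hC0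
    have h2 : (C0:ℤ) * ((j:ℤ)+1) ≤
        (C0:ℤ) * ((G.filter (fun h => g0 ≤ h ∧ h < g0 + C0*(j+1))).card : ℤ) := by
      calc (C0:ℤ) * ((j:ℤ)+1) = ((C0 * (j+1) : ℕ) : ℤ) := by push_cast; ring
      _ ≤ _ := hc
    have h3 := le_of_mul_le_mul_left h2 hC0pos
    exact_mod_cast h3
  have hSk : k ≤ S.card := by
    rcases Nat.eq_zero_or_pos k with rfl | hk
    · omega
    · have h1 := hScount (k-1) (by omega)
      have h2 := Finset.card_le_card (Finset.filter_subset (fun t => t < C0 * (k-1+1)) S)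
      omega
  set e := S.orderIsoOfFin rfl with hedef
  set b : Fin k → ℕ := fun j => (e (Fin.castLE hSk j) : ℕ) with hbdef
  have hbmono : StrictMono b := by
    intro j j' hjj
    have h1 : (Fin.castLE hSk j) < (Fin.castLE hSk j') := by
      rw [Fin.lt_def]
      simpa using (Fin.lt_def.mp hjj)
    exact e.strictMono h1
  have hbS : ∀ j : Fin k, b j ∈ S := fun j => (e (Fin.castLE hSk j)).2
  have hbbd : ∀ j : Fin k, b j < C0 * ((j : ℕ) + 1) := by
    intro j
    by_contra hcon
    push_neg at hcon
    have hcard2 : (S.filter (fun t => t < C0 * ((j:ℕ) + 1))).card ≤ (j : ℕ) := by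
      have hmaps : ∀ t ∈ S.filter (fun t => t < C0 * ((j:ℕ) + 1)),
          (fun t => if ht : t ∈ S then ((e.symm ⟨t, ht⟩ : Fin S.card) : ℕ) else 0) t ∈
            Finset.range (j : ℕ) := by
        intro t ht
        obtain ⟨htS, htlt⟩ := Finset.mem_filter.1 ht
        simp only [dif_pos htS, Finset.mem_range]
        by_contra hge
        push_neg at hge
        have h1 : (Fin.castLE hSk j) ≤ e.symm ⟨t, htS⟩ := by
          rw [Fin.le_def]
          simpa using hge
        have h2 := e.monotone h1
        rw [OrderIso.apply_symm_apply] at h2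
        have h3 : b j ≤ t := Subtype.coe_le_coe.2 h2
        omega
      have hinj2 : Set.InjOn (fun t => if ht : t ∈ S then ((e.symm ⟨t, ht⟩ : Fin S.card) : ℕ) else 0)
          ↑(S.filter (fun t => t < C0 * ((j:ℕ) + 1))) := by
        intro a ha b' hb' hab
        have haS := (Finset.mem_filter.1 ha).1
        have hbS' := (Finset.mem_filter.1 hb').1
        simp only [dif_pos haS, dif_pos hbS'] at hab
        have h4 : (e.symm ⟨a, haS⟩) = (e.symm ⟨b', hbS'⟩) := Fin.val_injective hab
        have h5 := congrArg (fun z => ((e z : { x // x ∈ S }) : ℕ)) h4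
        simpa [OrderIso.apply_symm_apply] using h5
      calc (S.filter (fun t => t < C0 * ((j:ℕ) + 1))).card
          ≤ (Finset.range (j:ℕ)).card := Finset.card_le_card_of_injOn _ hmaps hinj2
        _ = (j : ℕ) := Finset.card_range _
    have hcard1 := hScount (j:ℕ) (by omega)
    omega
  refine ⟨g0, b, hbmono, hbbd, ?_⟩
  intro j
  obtain ⟨h, hh, hhb⟩ := Finset.mem_image.1 (hbS j)
  obtain ⟨hhG, hhge⟩ := Finset.mem_filter.1 hh
  have heq : g0 + b j = h := by omega
  rw [heq]
  exact hhG

lemma ultra_diag {f : X → X} {A : Set X} {C0 : ℕ}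
    (h : ∀ k : ℕ, ∃ b : Fin k → ℕ, StrictMono b ∧ (∀ j : Fin k, b j < C0 * ((j : ℕ) + 1)) ∧
      ShatterTimes f A (Finset.univ.image b)) :
    ∃ c : ℕ → ℕ, StrictMono c ∧ ∀ m : ℕ, ShatterTimes f A ((Finset.range m).image c) := by
  choose B hBmono hBbd hBsh using h
  set β : ℕ → ℕ → ℕ := fun k j => if hj : j < k then B k ⟨j, hj⟩ else 0 with hβdef
  set 𝒰 := @Filter.hyperfilter ℕ _ with h𝒰def
  have hcof : ∀ s : Set ℕ, sᶜ.Finite → s ∈ 𝒰 := by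
    intro s hs
    have := Filter.compl_mem_hyperfilter_of_finite hs
    simpa using this
  have hval : ∀ j : ℕ, ∃ v : ℕ, v < C0 * (j + 1) ∧ {k : ℕ | β k j = v} ∈ 𝒰 := by
    intro j
    by_contra hcon
    push_neg at hcon
    have h1 : ∀ v < C0 * (j + 1), {k : ℕ | β k j = v}ᶜ ∈ 𝒰 := by
      intro v hv
      exact (Ultrafilter.compl_mem_iff_notMem).2 (fun hmem => (hcon v hv) hmem)
    have h2 : (⋂ v ∈ Finset.range (C0 * (j + 1)), {k : ℕ | β k j = v}ᶜ) ∈ 𝒰 :=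
      (Filter.biInter_finset_mem _).2 fun v hv => h1 v (Finset.mem_range.1 hv)
    have h3 : {k : ℕ | j < k} ∈ 𝒰 := by
      apply hcof
      have : {k : ℕ | j < k}ᶜ = Set.Iic j := by
        ext k; simp [Set.mem_Iic]
      rw [this]
      exact Set.finite_Iic j
    obtain ⟨k, hk⟩ := Filter.nonempty_of_mem (Filter.inter_mem h2 h3)
    obtain ⟨hk2, hk3⟩ := hk
    have hjk : j < k := hk3
    have hb : β k j = B k ⟨j, hjk⟩ := by simp [hβdef, hjk]
    have hbd : β k j < C0 * (j + 1) := by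
      rw [hb]
      simpa using hBbd k ⟨j, hjk⟩
    have h4 := Set.mem_iInter₂.1 hk2 (β k j) (Finset.mem_range.2 hbd)
    exact h4 rfl
  choose c hcbd hcmem using hval
  have hstab : ∀ m : ℕ, ∃ k : ℕ, m ≤ k ∧ ∀ j < m, β k j = c j := by
    intro m
    have h2 : (⋂ j ∈ Finset.range m, {k : ℕ | β k j = c j}) ∈ 𝒰 :=
      (Filter.biInter_finset_mem _).2 fun j _ => hcmem j
    have h3 : {k : ℕ | m ≤ k} ∈ 𝒰 := by
      apply hcof
      have : {k : ℕ | m ≤ k}ᶜ = Set.Iio m := by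
        ext k; simp [Set.mem_Iio]
      rw [this]
      exact Set.finite_Iio m
    obtain ⟨k, hk⟩ := Filter.nonempty_of_mem (Filter.inter_mem h2 h3)
    obtain ⟨hk2, hk3⟩ := hk
    refine ⟨k, hk3, ?_⟩
    intro j hj
    exact Set.mem_iInter₂.1 hk2 j (Finset.mem_range.2 hj)
  have hβval : ∀ (k m : ℕ) (hmk : m ≤ k) (_ : ∀ j < m, β k j = c j) (j : ℕ) (hj : j < m), c j = B k ⟨j, by omega⟩ := by
    intro k m hmk hall j hj
    have := hall j hj
    rw [hβdef] at this
    simp only [dif_pos (show j < k by omega)] at this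
    exact this.symm
  refine ⟨c, ?_, ?_⟩
  · intro j j' hjj
    obtain ⟨k, hk1, hk2⟩ := hstab (j' + 1)
    have e1 : c j = B k ⟨j, by omega⟩ := hβval k (j'+1) hk1 hk2 j (by omega)
    have e2 : c j' = B k ⟨j', by omega⟩ := hβval k (j'+1) hk1 hk2 j' (by omega)
    rw [e1, e2]
    exact hBmono k (by simpa [Fin.lt_def] using hjj)
  · intro m
    obtain ⟨k, hk1, hk2⟩ := hstab m
    apply shatterTimes_subset (hBsh k)
    intro i hi
    obtain ⟨j, hj, rfl⟩ := Finset.mem_image.1 hi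
    rw [Finset.mem_range] at hj
    rw [hβval k m hk1 hk2 j hj]
    exact Finset.mem_image.2 ⟨⟨j, by omega⟩, Finset.mem_univ _, rfl⟩

lemma chain_contradiction [TopologicalSpace X] [TopologicalSpace.NoetherianSpace X]
    {f : X → X} (hf : Continuous f) {A : Set X} (hA : IsClosed A)
    {c : ℕ → ℕ} (hc : StrictMono c)
    (h : ∀ m : ℕ, ShatterTimes f A ((Finset.range m).image c)) : False := by
  set D : ℕ → TopologicalSpace.Closeds X := fun m =>
    ⟨⋂ j ∈ Finset.range m, f^[c j] ⁻¹' A, by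
      exact isClosed_biInter fun j _ => hA.preimage (hf.iterate _)⟩ with hD
  have hmemD : ∀ m x, x ∈ (D m : Set X) ↔ ∀ j < m, f^[c j] x ∈ A := by
    intro m x
    simp only [hD, TopologicalSpace.Closeds.coe_mk, Set.mem_iInter, Set.mem_preimage,
      Finset.mem_range]
  have hlt : ∀ m, D (m + 1) < D m := by
    intro m
    have hsub : ((Finset.range m).image c) ⊆ ((Finset.range (m + 1)).image c) :=
      Finset.image_subset_image (Finset.range_subset_range.2 (by omega))
    obtain ⟨x, hx⟩ := h (m + 1) ((Finset.range m).image c) hsub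
    have hxm : x ∈ (D m : Set X) := by
      rw [hmemD]
      intro j hj
      refine (hx (c j) ?_).2 ?_
      · exact hsub (Finset.mem_image.2 ⟨j, Finset.mem_range.2 hj, rfl⟩)
      · exact Finset.mem_image.2 ⟨j, Finset.mem_range.2 hj, rfl⟩
    have hxm1 : x ∉ (D (m + 1) : Set X) := by
      intro hmem
      rw [hmemD] at hmem
      have h1 : f^[c m] x ∈ A := hmem m (by omega)
      have h2 := (hx (c m) (Finset.mem_image.2 ⟨m, Finset.mem_range.2 (by omega), rfl⟩)).1 h1
      obtain ⟨j, hj, hjc⟩ := Finset.mem_image.1 h2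
      rw [Finset.mem_range] at hj
      have := hc.injective hjc
      omega
    have hle : D (m + 1) ≤ D m := by
      intro y hy
      have hy' : ∀ j < m + 1, f^[c j] y ∈ A := (hmemD _ y).1 hy
      exact (hmemD m y).2 (fun j hj => hy' j (by omega))
    refine lt_of_le_of_ne hle ?_
    intro heq
    rw [heq] at hxm1
    exact hxm1 hxm
  have hwf : WellFounded ((· < ·) : TopologicalSpace.Closeds X → TopologicalSpace.Closeds X → Prop) :=
    wellFounded_lt
  obtain ⟨Dm, ⟨m, rfl⟩, hmin⟩ := hwf.has_min (Set.range D) ⟨D 0, 0, rfl⟩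
  exact hmin (D (m + 1)) ⟨m + 1, rfl⟩ (hlt m)

lemma choose_mono_left {n : ℕ} : ∀ {j k : ℕ}, j ≤ k → 2 * k ≤ n → n.choose j ≤ n.choose k := by
  intro j k
  induction k with
  | zero =>
    intro h _
    have : j = 0 := by omega
    subst this
    exact le_rfl
  | succ k ih =>
    intro hjk hn
    rcases Nat.lt_or_ge j (k + 1) with hcase | hcase
    · have h1 : n.choose j ≤ n.choose k := ih (by omega) (by omega)
      have h3 := Nat.choose_succ_right_eq n k
      have h4 : n.choose k * (k + 1) ≤ n.choose k * (n - k) :=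
        Nat.mul_le_mul_left _ (by omega)
      rw [← h3] at h4
      have h5 : n.choose k ≤ n.choose (k + 1) := Nat.le_of_mul_le_mul_right h4 (by omega)
      omega
    · have : j = k + 1 := by omega
      subst this
      exact le_rfl

lemma pow_self_le_exp_mul_factorial (d : ℕ) :
    (d : ℝ) ^ d ≤ Real.exp 1 ^ d * (d.factorial : ℝ) := by
  induction d with
  | zero => simp
  | succ d ih =>
    have hexp1 : (1:ℝ) ≤ Real.exp 1 := by
      have := Real.add_one_le_exp (1:ℝ); linarith
    have h2 : ((d : ℝ) + 1) ^ d ≤ Real.exp 1 * (d : ℝ) ^ d := by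
      rcases Nat.eq_zero_or_pos d with rfl | hd
      · simpa using hexp1
      · have hdpos : (0:ℝ) < (d:ℝ) := by exact_mod_cast hd
        have h3 : (d : ℝ) + 1 ≤ (d:ℝ) * Real.exp (1 / d) := by
          have h4 := Real.add_one_le_exp (1 / (d:ℝ))
          have h5 : (d:ℝ) * (1/(d:ℝ) + 1) ≤ (d:ℝ) * Real.exp (1/(d:ℝ)) :=
            mul_le_mul_of_nonneg_left h4 hdpos.le
          have h6 : (d:ℝ) * (1/(d:ℝ) + 1) = (d:ℝ) + 1 := by field_simp; ring
          linarith
        calc ((d : ℝ) + 1) ^ d ≤ ((d:ℝ) * Real.exp (1 / d)) ^ d :=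
              pow_le_pow_left₀ (by positivity) h3 d
        _ = (d:ℝ)^d * Real.exp (1/d) ^ d := mul_pow _ _ _
        _ = (d:ℝ)^d * Real.exp 1 := by
              rw [← Real.exp_nat_mul]
              congr 1
              field_simp
        _ = Real.exp 1 * (d:ℝ)^d := by ring
    have hfact : ((d+1).factorial : ℝ) = ((d:ℝ)+1) * (d.factorial : ℝ) := by
      rw [Nat.factorial_succ]; push_cast; ring
    calc ((d+1 : ℕ) : ℝ) ^ (d+1) = ((d:ℝ)+1)^d * ((d:ℝ)+1) := by push_cast; ring
    _ ≤ (Real.exp 1 * (d:ℝ)^d) * ((d:ℝ)+1) := by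
          apply mul_le_mul_of_nonneg_right h2 (by positivity)
    _ ≤ (Real.exp 1 * (Real.exp 1 ^ d * (d.factorial : ℝ))) * ((d:ℝ)+1) := by
          apply mul_le_mul_of_nonneg_right _ (by positivity)
          exact mul_le_mul_of_nonneg_left ih (Real.exp_pos 1).le
    _ = Real.exp 1 ^ (d+1) * ((d+1).factorial : ℝ) := by
          rw [hfact]; ring

lemma choose_mul_factorial_le_pow (n d : ℕ) : n.choose d * d.factorial ≤ n ^ d := by
  have h1 := Nat.descFactorial_eq_factorial_mul_choose n d
  have h2 := Nat.descFactorial_le_pow n d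
  rw [Nat.mul_comm]
  omega

set_option maxHeartbeats 1000000 in
lemma choose_sum_small {μ : ℝ} (hμ : 1 < μ) (r : ℕ) :
    ∃ C0 : ℕ, 8 ≤ C0 ∧ ∃ N : ℕ, ∀ n ≥ N,
      ((∑ j ∈ Finset.range (2 * n / C0 + 1), n.choose j : ℕ) : ℝ) ^ r < μ ^ n := by
  have hμ0 : 0 < μ := lt_trans one_pos hμ
  have hL : 0 < Real.log μ := Real.log_pos hμ
  set L := Real.log μ with hLdef
  -- choose C0
  have hlito := Real.isLittleO_log_id_atTop
  have hev1 : ∀ᶠ x : ℝ in atTop, Real.log x ≤ (L / (8 * ((r:ℝ) + 1))) * x := by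
    have hc : (0:ℝ) < L / (8 * ((r:ℝ) + 1)) := by positivity
    filter_upwards [hlito.bound hc, Filter.eventually_ge_atTop (0:ℝ)] with x hx hx0
    calc Real.log x ≤ |Real.log x| := le_abs_self _
    _ ≤ (L / (8 * ((r:ℝ) + 1))) * |x| := by simpa [Real.norm_eq_abs] using hx
    _ = (L / (8 * ((r:ℝ) + 1))) * x := by rw [abs_of_nonneg hx0]
  have hev2 : ∀ᶠ x : ℝ in atTop, (1:ℝ) ≤ (L / (8 * ((r:ℝ) + 1))) * x := by
    have hc : (0:ℝ) < L / (8 * ((r:ℝ) + 1)) := by positivity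
    filter_upwards [Filter.eventually_ge_atTop ((L / (8 * ((r:ℝ) + 1)))⁻¹)] with x hx
    calc (1:ℝ) = (L / (8*((r:ℝ)+1))) * (L / (8*((r:ℝ)+1)))⁻¹ := (mul_inv_cancel₀ hc.ne').symm
    _ ≤ _ := mul_le_mul_of_nonneg_left hx hc.le
  obtain ⟨x₀, hx₀⟩ := Filter.eventually_atTop.1 (hev1.and hev2)
  set c : ℝ := L / (8 * ((r:ℝ) + 1)) with hcdef
  have hcpos : (0:ℝ) < c := by positivity
  obtain ⟨M, hM⟩ := exists_nat_ge x₀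
  obtain ⟨C0, hC0a, hC0x⟩ : ∃ C0 : ℕ, 8 ≤ C0 ∧ x₀ ≤ (C0 : ℝ) := by
    refine ⟨max 8 (M + 8), le_max_left _ _, ?_⟩
    calc x₀ ≤ (M:ℝ) := hM
    _ ≤ ((max 8 (M + 8) : ℕ) : ℝ) := by
        have : M ≤ max 8 (M + 8) := by omega
        exact_mod_cast this
  have hC0pos : (0:ℝ) < (C0:ℝ) := by
    have : (8:ℝ) ≤ (C0:ℝ) := by exact_mod_cast hC0a
    linarith
  obtain ⟨hlogC0, hone⟩ := hx₀ (C0:ℝ) hC0x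
  have hkey : (2*(r:ℝ)+2) * (1 + Real.log C0) ≤ (C0:ℝ) * (L/2) := by
    have h1 : 1 + Real.log C0 ≤ 2 * (c * C0) := by linarith
    have h2 : (2*(r:ℝ)+2) * (1 + Real.log C0) ≤ (2*(r:ℝ)+2) * (2 * (c * C0)) := by
      apply mul_le_mul_of_nonneg_left h1 (by positivity)
    calc (2*(r:ℝ)+2) * (1 + Real.log C0) ≤ (2*(r:ℝ)+2) * (2 * (c * C0)) := h2
    _ = (C0:ℝ) * (L/2) := by rw [hcdef]; field_simp; ring
  refine ⟨C0, hC0a, ?_⟩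
  -- choose N
  obtain ⟨N₁, hN₁⟩ := exists_nat_ge x₀
  refine ⟨max (max C0 (N₁ + 1)) (r + 1), ?_⟩
  intro n hn
  have hnC0 : C0 ≤ n := le_trans (le_trans (le_max_left _ _) (le_max_left _ _)) hn
  have hnN₁ : N₁ + 1 ≤ n := le_trans (le_trans (le_max_right _ _) (le_max_left _ _)) hn
  have hnr : r + 1 ≤ n := le_trans (le_max_right _ _) hn
  clear hn
  have hn1 : 1 ≤ n := by omega
  have hnpos : (0:ℝ) < (n:ℝ) := by exact_mod_cast hn1
  set dm : ℕ := 2 * n / C0 with hdmdef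
  have hC0pos' : 0 < C0 := by omega
  have hC0dm_ge : 2 * n < C0 * dm + C0 := by
    rw [hdmdef]
    have h1 := Nat.div_add_mod (2 * n) C0
    have h2 : (2 * n) % C0 < C0 := Nat.mod_lt _ hC0pos'
    omega
  have hC0dm_le : C0 * dm ≤ 2 * n := by
    rw [hdmdef, Nat.mul_comm]
    exact Nat.div_mul_le_self (2 * n) C0
  have hdm1 : 1 ≤ dm := by
    rw [hdmdef]
    exact (Nat.one_le_div_iff (by omega)).2 (by omega)
  have h8dm : 8 * dm ≤ C0 * dm := Nat.mul_le_mul_right dm hC0a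
  have h2dm : 2 * dm ≤ n := by omega
  have hndm : (n:ℝ) ≤ (C0:ℝ) * (dm:ℝ) := by
    have h1 : n ≤ C0 * dm := by omega
    calc (n:ℝ) ≤ ((C0 * dm : ℕ) : ℝ) := by exact_mod_cast h1
    _ = (C0:ℝ) * (dm:ℝ) := by push_cast; ring
  -- sum bound
  set S : ℕ := ∑ j ∈ Finset.range (dm + 1), n.choose j with hSdef
  have hS1 : 1 ≤ S := by
    rw [hSdef]
    calc 1 = n.choose 0 := (Nat.choose_zero_right n).symm
    _ ≤ ∑ j ∈ Finset.range (dm + 1), n.choose j :=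
        Finset.single_le_sum (fun j _ => Nat.zero_le _) (Finset.mem_range.2 (Nat.succ_pos dm))
  have hSd : S ≤ (dm + 1) * n.choose dm := by
    rw [hSdef]
    calc ∑ j ∈ Finset.range (dm + 1), n.choose j
        ≤ ∑ _j ∈ Finset.range (dm + 1), n.choose dm :=
          Finset.sum_le_sum (fun j hj =>
            choose_mono_left (Nat.lt_succ_iff.1 (Finset.mem_range.1 hj)) h2dm)
    _ = (dm + 1) * n.choose dm := by rw [Finset.sum_const, Finset.card_range, smul_eq_mul]
  -- real estimates
  have hSr : (S:ℝ) ≤ ((n:ℝ)+1) * (Real.exp 1 * C0) ^ dm := by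
    have hdmn : dm ≤ n := by omega
    have hd1 : ((dm:ℝ) + 1) ≤ (n:ℝ) + 1 := by
      have : (dm:ℝ) ≤ (n:ℝ) := by exact_mod_cast hdmn
      linarith
    have hchoose : (n.choose dm : ℝ) ≤ (Real.exp 1 * C0) ^ dm := by
      have hA : (n.choose dm : ℝ) * (dm.factorial : ℝ) ≤ (n:ℝ) ^ dm := by
        have := choose_mul_factorial_le_pow n dm
        exact_mod_cast this
      have hB : (n:ℝ)^dm ≤ ((C0:ℝ) * dm)^dm := pow_le_pow_left₀ (by positivity) hndm dm
      have hD := pow_self_le_exp_mul_factorial dm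
      have hfacpos : (0:ℝ) < (dm.factorial : ℝ) := by exact_mod_cast dm.factorial_pos
      have hF : (n.choose dm : ℝ) * dm.factorial ≤ ((Real.exp 1 * C0)^dm) * dm.factorial := by
        calc (n.choose dm : ℝ) * dm.factorial ≤ (n:ℝ)^dm := hA
        _ ≤ ((C0:ℝ) * dm)^dm := hB
        _ = (C0:ℝ)^dm * (dm:ℝ)^dm := mul_pow _ _ _
        _ ≤ (C0:ℝ)^dm * (Real.exp 1 ^ dm * dm.factorial) :=
            mul_le_mul_of_nonneg_left hD (by positivity)
        _ = ((Real.exp 1 * C0)^dm) * dm.factorial := by rw [mul_pow]; ring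
      exact le_of_mul_le_mul_right hF hfacpos
    calc (S:ℝ) ≤ ((dm:ℝ)+1) * (n.choose dm : ℝ) := by exact_mod_cast hSd
    _ ≤ ((n:ℝ)+1) * (Real.exp 1 * C0)^dm :=
        mul_le_mul hd1 hchoose (by positivity) (by positivity)
  have hSpos : (0:ℝ) < (S:ℝ) := by exact_mod_cast hS1
  have hlogS : Real.log (S:ℝ) ≤ Real.log ((n:ℝ)+1) + (dm:ℝ) * (1 + Real.log C0) := by
    calc Real.log (S:ℝ) ≤ Real.log (((n:ℝ)+1) * (Real.exp 1 * C0)^dm) :=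
          Real.log_le_log hSpos hSr
    _ = Real.log ((n:ℝ)+1) + (dm:ℝ) * Real.log (Real.exp 1 * C0) := by
          rw [Real.log_mul (by positivity) (by positivity), Real.log_pow]
    _ = Real.log ((n:ℝ)+1) + (dm:ℝ) * (1 + Real.log C0) := by
          rw [Real.log_mul (Real.exp_pos 1).ne' hC0pos.ne', Real.log_exp]
  have hdmreal : (dm:ℝ) * (C0:ℝ) ≤ 2 * (n:ℝ) := by
    calc (dm:ℝ) * C0 = ((C0 * dm : ℕ) : ℝ) := by push_cast; ring
    _ ≤ ((2*n : ℕ):ℝ) := by exact_mod_cast hC0dm_le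
    _ = 2*(n:ℝ) := by push_cast; ring
  have hlogC0nonneg : (0:ℝ) ≤ 1 + Real.log C0 := by
    have h1 : (1:ℝ) ≤ (C0:ℝ) := by
      have : (1:ℕ) ≤ C0 := by omega
      exact_mod_cast this
    have := Real.log_nonneg h1
    linarith
  have hdmnonneg : (0:ℝ) ≤ (dm:ℝ) := by positivity
  have hrnonneg : (0:ℝ) ≤ (r:ℝ) := by positivity
  have hpart2 : (r:ℝ) * ((dm:ℝ) * (1 + Real.log C0)) ≤ (n:ℝ) * L / 2 := by
    have h1 : (dm:ℝ) * ((2*(r:ℝ)+2) * (1 + Real.log C0)) ≤ (dm:ℝ) * ((C0:ℝ) * (L/2)) :=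
      mul_le_mul_of_nonneg_left hkey hdmnonneg
    have h2 : ((dm:ℝ) * (C0:ℝ)) * (L/2) ≤ (2*(n:ℝ)) * (L/2) :=
      mul_le_mul_of_nonneg_right hdmreal (by positivity)
    nlinarith [h1, h2, mul_nonneg hdmnonneg hlogC0nonneg]
  have hpart1 : (r:ℝ) * Real.log ((n:ℝ)+1) < (n:ℝ) * L / 2 := by
    have hx : x₀ ≤ (n:ℝ) + 1 := by
      have : (N₁:ℝ) ≤ (n:ℝ) := by exact_mod_cast (by omega : N₁ ≤ n)
      linarith
    obtain ⟨hlogn, -⟩ := hx₀ ((n:ℝ)+1) hx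
    have hrn : (r:ℝ) + 1 ≤ (n:ℝ) := by exact_mod_cast hnr
    have hc8 : c * (8*((r:ℝ)+1)) = L := by
      rw [hcdef]; field_simp
    have hstep1 : (r:ℝ) * Real.log ((n:ℝ)+1) ≤ (r:ℝ) * (c * ((n:ℝ)+1)) :=
      mul_le_mul_of_nonneg_left hlogn hrnonneg
    have hstep2 : (r:ℝ) * ((n:ℝ)+1) < 4 * (n:ℝ) * ((r:ℝ)+1) := by
      nlinarith [hrn, hnpos, hrnonneg, mul_nonneg hrnonneg hnpos.le]
    have hstep3 : (r:ℝ) * (c * ((n:ℝ)+1)) < c * (4 * (n:ℝ) * ((r:ℝ)+1)) := by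
      have h := mul_lt_mul_of_pos_left hstep2 hcpos
      calc (r:ℝ) * (c * ((n:ℝ)+1)) = c * ((r:ℝ) * ((n:ℝ)+1)) := by ring
      _ < c * (4 * (n:ℝ) * ((r:ℝ)+1)) := h
    have hstep4 : c * (4 * (n:ℝ) * ((r:ℝ)+1)) = (n:ℝ) * L / 2 := by
      rw [← hc8]; ring
    linarith
  have hfinal : (r:ℝ) * Real.log (S:ℝ) < (n:ℝ) * L := by
    have := mul_le_mul_of_nonneg_left hlogS hrnonneg
    have hexpand : (r:ℝ) * (Real.log ((n:ℝ)+1) + (dm:ℝ) * (1 + Real.log C0))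
        = (r:ℝ) * Real.log ((n:ℝ)+1) + (r:ℝ) * ((dm:ℝ) * (1 + Real.log C0)) := by ring
    rw [hexpand] at this
    linarith
  have hgoal1 : ((S:ℝ))^r = Real.exp ((r:ℝ) * Real.log (S:ℝ)) := by
    rw [← Real.log_pow, Real.exp_log (pow_pos hSpos r)]
  have hgoal2 : μ^n = Real.exp ((n:ℝ) * L) := by
    rw [hLdef, ← Real.log_pow, Real.exp_log (pow_pos hμ0 n)]
  rw [hgoal1, hgoal2]
  exact Real.exp_lt_exp.2 hfinal

lemma dynN_le_prod_traces [TopologicalSpace X] (f : X → X) (U : Finset (Set X))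
    (hopen : ∀ u ∈ U, IsOpen u) (hcov : ⋃₀ (U : Set (Set X)) = Set.univ) :
    ∃ Q : Fin U.card → Set X, (∀ a, IsClosed (Q a)) ∧
      ∀ n, dynN f U n ≤ ∏ a : Fin U.card, (traceFam f (Q a) n).card := by
  set r := U.card with hrdef
  set Lst : Fin r → Set X := fun a => ((U.equivFin.symm a : U) : Set X) with hLdef
  have hLmem : ∀ a, Lst a ∈ U := fun a => (U.equivFin.symm a).2
  have hLopen : ∀ a, IsOpen (Lst a) := fun a => hopen _ (hLmem a)
  have hLcov : ∀ x : X, ∃ a, x ∈ Lst a := by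
    intro x
    have hx : x ∈ ⋃₀ (U : Set (Set X)) := by rw [hcov]; trivial
    obtain ⟨u, hu, hxu⟩ := hx
    refine ⟨U.equivFin ⟨u, hu⟩, ?_⟩
    rw [hLdef]
    simp only [Equiv.symm_apply_apply]
    exact hxu
  -- minimal index
  set idxset : X → Finset (Fin r) := fun x => Finset.univ.filter (fun a => x ∈ Lst a) with hidxset
  have hidxne : ∀ x, (idxset x).Nonempty := by
    intro x
    obtain ⟨a, ha⟩ := hLcov x
    exact ⟨a, Finset.mem_filter.2 ⟨Finset.mem_univ _, ha⟩⟩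
  set minIdx : X → Fin r := fun x => (idxset x).min' (hidxne x) with hminIdx
  have hminmem : ∀ x, x ∈ Lst (minIdx x) := by
    intro x
    have := (idxset x).min'_mem (hidxne x)
    exact (Finset.mem_filter.1 this).2
  -- threshold sets
  set Q : Fin r → Set X := fun a => (⋃ b : Fin r, ⋃ (_ : b < a), Lst b)ᶜ with hQdef
  have hQclosed : ∀ a, IsClosed (Q a) := by
    intro a
    rw [hQdef]
    apply IsOpen.isClosed_compl
    exact isOpen_iUnion (fun b => isOpen_iUnion (fun _ => hLopen b))
  have hQchar : ∀ (x : X) (a : Fin r), x ∈ Q a ↔ a ≤ minIdx x := by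
    intro x a
    rw [hQdef]
    simp only [Set.mem_compl_iff, Set.mem_iUnion, not_exists]
    constructor
    · intro hnot
      by_contra hlt
      push_neg at hlt
      have hmem : minIdx x ∈ idxset x := (idxset x).min'_mem (hidxne x)
      exact hnot (minIdx x) hlt (hminmem x)
    · intro hle b hb hxb
      have : b ∈ idxset x := Finset.mem_filter.2 ⟨Finset.mem_univ _, hxb⟩
      have := (idxset x).min'_le b this
      exact absurd (lt_of_lt_of_le hb hle) (not_lt.2 this)
  refine ⟨Q, hQclosed, ?_⟩
  intro n
  -- the itinerary map and trace maps
  set Φ : X → (Fin n → Fin r) := fun x i => minIdx (f^[(i : ℕ)] x) with hΦ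
  set Ψ : X → (Fin r → Finset (Fin n)) := fun x a =>
    Finset.univ.filter (fun i : Fin n => f^[(i : ℕ)] x ∈ Q a) with hΨ
  have hdet : ∀ x y : X, Ψ x = Ψ y → Φ x = Φ y := by
    intro x y hxy
    funext i
    have hab : ∀ a : Fin r, (f^[(i : ℕ)] x ∈ Q a ↔ f^[(i : ℕ)] y ∈ Q a) := by
      intro a
      have h1 := congrFun hxy a
      have h2 : (i ∈ Finset.univ.filter (fun i : Fin n => f^[(i : ℕ)] x ∈ Q a)) ↔
          (i ∈ Finset.univ.filter (fun i : Fin n => f^[(i : ℕ)] y ∈ Q a)) := by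
        rw [hΨ] at h1
        simp only at h1
        rw [h1]
      simpa using h2
    have h3 : ∀ a : Fin r, a ≤ minIdx (f^[(i : ℕ)] x) ↔ a ≤ minIdx (f^[(i : ℕ)] y) := by
      intro a
      rw [← hQchar, ← hQchar]
      exact hab a
    rw [hΦ]
    simp only
    exact le_antisymm ((h3 _).1 le_rfl) ((h3 _).2 le_rfl)
  -- dynN ≤ card of range of Φ
  have hrange : (Set.range Φ).Finite := Set.toFinite _
  set RΦ := hrange.toFinset with hRΦ
  have hdyn1 : dynN f U n ≤ RΦ.card := by
    apply Nat.sInf_le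
    refine ⟨fun j i => Lst ((RΦ.equivFin.symm j : (Fin n → Fin r)) i), ?_, ?_⟩
    · intro j i
      exact hLmem _
    · apply Set.eq_univ_of_forall
      intro x
      have hmem : Φ x ∈ RΦ := by
        rw [hRΦ, Set.Finite.mem_toFinset]
        exact ⟨x, rfl⟩
      refine Set.mem_iUnion.2 ⟨RΦ.equivFin ⟨Φ x, hmem⟩, ?_⟩
      refine Set.mem_iInter.2 ?_
      intro i
      rw [Set.mem_preimage]
      show f^[(i : ℕ)] x ∈ Lst ((RΦ.equivFin.symm (RΦ.equivFin ⟨Φ x, hmem⟩) : (Fin n → Fin r)) i)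
      simp only [Equiv.symm_apply_apply]
      exact hminmem _
  -- card of range of Φ ≤ product
  have hdyn2 : RΦ.card ≤ ∏ a : Fin r, (traceFam f (Q a) n).card := by
    have hchoice : ∀ φ ∈ RΦ, ∃ x : X, Φ x = φ := by
      intro φ hφ
      rwa [hRΦ, Set.Finite.mem_toFinset] at hφ
    choose pick hpick using hchoice
    set F : (Fin n → Fin r) → (Fin r → Finset (Fin n)) := fun φ =>
      if h : φ ∈ RΦ then Ψ (pick φ h) else (fun _ => ∅) with hF
    have hmaps : ∀ φ ∈ RΦ, F φ ∈ Fintype.piFinset (fun a => traceFam f (Q a) n) := by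
      intro φ hφ
      rw [hF]
      simp only [dif_pos hφ]
      rw [Fintype.mem_piFinset]
      intro a
      rw [traceFam, Set.Finite.mem_toFinset]
      refine ⟨pick φ hφ, ?_⟩
      rw [hΨ]
      ext i
      simp only [Finset.mem_filter]
    have hinj : Set.InjOn F ↑RΦ := by
      intro φ1 h1 φ2 h2 heq
      have h1' : φ1 ∈ RΦ := by simpa using h1
      have h2' : φ2 ∈ RΦ := by simpa using h2
      rw [hF] at heq
      simp only [dif_pos h1', dif_pos h2'] at heq
      have := hdet _ _ heq
      rw [hpick φ1 h1, hpick φ2 h2] at this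
      exact this
    calc RΦ.card ≤ (Fintype.piFinset (fun a => traceFam f (Q a) n)).card :=
          Finset.card_le_card_of_injOn F hmaps hinj
    _ = ∏ a : Fin r, (traceFam f (Q a) n).card := Fintype.card_piFinset _
  exact le_trans hdyn1 hdyn2

lemma no_exponential_traces [TopologicalSpace X] [TopologicalSpace.NoetherianSpace X]
    {f : X → X} (hf : Continuous f) {A : Set X} (hA : IsClosed A)
    {μ : ℝ} (hμ : 1 < μ) {r : ℕ} (hr : 0 < r)
    (H : ∀ N : ℕ, ∃ n ≥ N, μ ^ n < ((traceFam f A n).card : ℝ) ^ r) : False := by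
  obtain ⟨C0, hC08, N0, hN0⟩ := choose_sum_small hμ r
  have KEY : ∀ k : ℕ, ∃ b : Fin k → ℕ, StrictMono b ∧ (∀ j : Fin k, b j < C0 * ((j : ℕ) + 1)) ∧
      ShatterTimes f A (Finset.univ.image b) := by
    intro k
    obtain ⟨n, hn, hexp⟩ := H (max N0 (C0 * (k + 1)))
    have hnN0 : N0 ≤ n := le_trans (le_max_left _ _) hn
    have hnk : C0 * (k + 1) ≤ n := le_trans (le_max_right _ _) hn
    have h1 : ((∑ j ∈ Finset.range (2 * n / C0 + 1), n.choose j : ℕ) : ℝ) ^ r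
        < ((traceFam f A n).card : ℝ) ^ r := lt_trans (hN0 n hnN0) hexp
    have h2 : ∑ j ∈ Finset.range (2 * n / C0 + 1), n.choose j < (traceFam f A n).card := by
      by_contra hcon
      push_neg at hcon
      have : ((traceFam f A n).card : ℝ) ^ r
          ≤ ((∑ j ∈ Finset.range (2 * n / C0 + 1), n.choose j : ℕ) : ℝ) ^ r := by
        apply pow_le_pow_left₀ (by positivity)
        exact_mod_cast hcon
      linarith
    obtain ⟨s, hsh, hscard⟩ := exists_big_shattered h2
    set G := s.image Fin.val with hGdef
    have hGcard : G.card = s.card := Finset.card_image_of_injective s Fin.val_injective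
    have hGn : ∀ g ∈ G, g < n := by
      intro g hg
      obtain ⟨i, -, rfl⟩ := Finset.mem_image.1 hg
      exact i.isLt
    have hdens : 2 * n ≤ C0 * G.card := by
      rw [hGcard]
      have hdge : 2 * n < C0 * (2 * n / C0) + C0 := by
        have h1' := Nat.div_add_mod (2 * n) C0
        have h2' : (2 * n) % C0 < C0 := Nat.mod_lt _ (by omega)
        omega
      have : C0 * (2 * n / C0 + 1) ≤ C0 * s.card := Nat.mul_le_mul_left C0 hscard
      have hexp2 : C0 * (2 * n / C0 + 1) = C0 * (2 * n / C0) + C0 := by ring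
      omega
    obtain ⟨g0, b, hb1, hb2, hb3⟩ := block_selection G n C0 k (by omega) hGn hdens hnk
    refine ⟨b, hb1, hb2, ?_⟩
    have hSh : ShatterTimes f A G := shatterTimes_of_shatters hsh
    have hsub : (Finset.univ.image (fun j => g0 + b j)) ⊆ G := by
      intro i hi
      obtain ⟨j, -, rfl⟩ := Finset.mem_image.1 hi
      exact hb3 j
    have h3 := shatterTimes_subset hSh hsub
    have h4 := shatterTimes_translate h3 (by
      intro i hi
      obtain ⟨j, -, rfl⟩ := Finset.mem_image.1 hi
      exact Nat.le_add_right _ _)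
    have h5 : ((Finset.univ.image (fun j => g0 + b j)).image (· - g0)) = Finset.univ.image b := by
      rw [Finset.image_image]
      apply Finset.image_congr
      intro j _
      simp
    rwa [h5] at h4
  obtain ⟨c, hc, hcs⟩ := ultra_diag KEY
  exact chain_contradiction hf hA hc hcs

lemma dynN_subexp [TopologicalSpace X] [TopologicalSpace.NoetherianSpace X]
    (f : X → X) (hf : Continuous f) (U : Finset (Set X))
    (hopen : ∀ u ∈ U, IsOpen u) (hcov : ⋃₀ (U : Set (Set X)) = Set.univ)
    {ε : ℝ} (hε : 0 < ε) :
    ∃ C : ℝ, 1 ≤ C ∧ ∀ n : ℕ, (dynN f U n : ℝ) ≤ C * (1 + ε) ^ n := by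
  by_contra hcon
  push_neg at hcon
  have INF : ∀ N : ℕ, ∃ n ≥ N, ((1:ℝ) + ε) ^ n < (dynN f U n : ℝ) := by
    intro N
    set C : ℝ := 1 + ∑ m ∈ Finset.range (N + 1), (dynN f U m : ℝ) with hCdef
    have hsum0 : 0 ≤ ∑ m ∈ Finset.range (N + 1), (dynN f U m : ℝ) :=
      Finset.sum_nonneg (fun _ _ => by positivity)
    have hC1 : 1 ≤ C := by rw [hCdef]; linarith
    obtain ⟨n, hn⟩ := hcon C hC1
    have hpow1 : (1:ℝ) ≤ (1 + ε) ^ n := one_le_pow₀ (by linarith)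
    refine ⟨n, ?_, ?_⟩
    · by_contra hlt
      push_neg at hlt
      have hmem : n ∈ Finset.range (N + 1) := Finset.mem_range.2 (by omega)
      have h1 : (dynN f U n : ℝ) ≤ C := by
        have := Finset.single_le_sum (f := fun m => (dynN f U m : ℝ))
          (fun _ _ => by positivity) hmem
        rw [hCdef]; linarith
      have h2 : C ≤ C * (1 + ε) ^ n := by
        calc C = C * 1 := (mul_one C).symm
        _ ≤ C * (1 + ε) ^ n := mul_le_mul_of_nonneg_left hpow1 (by linarith)
      linarith
    · have h2 : 1 * (1 + ε) ^ n ≤ C * (1 + ε) ^ n :=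
        mul_le_mul_of_nonneg_right hC1 (by positivity)
      linarith
  obtain ⟨Q, hQc, hQb⟩ := dynN_le_prod_traces f U hopen hcov
  rcases Nat.eq_zero_or_pos U.card with hr0 | hrpos
  · obtain ⟨n, -, hlt⟩ := INF 0
    have h1 : dynN f U n ≤ 1 := by
      have h2 := hQb n
      have h3 : ∏ a : Fin U.card, (traceFam f (Q a) n).card = 1 := by
        apply Finset.prod_eq_one
        intro a _
        have := a.isLt
        omega
      omega
    have h2 : (1:ℝ) ≤ (1 + ε) ^ n := one_le_pow₀ (by linarith)
    have h3 : (dynN f U n : ℝ) ≤ 1 := by exact_mod_cast h1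
    linarith
  have hmax : ∀ n : ℕ, ∃ a : Fin U.card, ∀ b : Fin U.card,
      (traceFam f (Q b) n).card ≤ (traceFam f (Q a) n).card := by
    intro n
    have hne : (Finset.univ : Finset (Fin U.card)).Nonempty := ⟨⟨0, hrpos⟩, Finset.mem_univ _⟩
    obtain ⟨a, -, ha⟩ := Finset.exists_max_image Finset.univ
      (fun a => (traceFam f (Q a) n).card) hne
    exact ⟨a, fun b => ha b (Finset.mem_univ b)⟩
  choose amax hamax using hmax
  have hpig : ∃ a : Fin U.card, ∀ N : ℕ, ∃ n, N ≤ n ∧ amax n = a ∧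
      ((1:ℝ) + ε) ^ n < (dynN f U n : ℝ) := by
    by_contra hcon2
    push_neg at hcon2
    choose Nf hNf using hcon2
    set NN := Finset.univ.sup Nf with hNN
    obtain ⟨n, hn1, hn2⟩ := INF NN
    have hle : Nf (amax n) ≤ n :=
      le_trans (Finset.le_sup (Finset.mem_univ (amax n))) hn1
    exact absurd hn2 (not_lt.2 (hNf (amax n) n hle rfl))
  obtain ⟨a, hA⟩ := hpig
  apply no_exponential_traces hf (hQc a)
    (show (1:ℝ) < 1 + ε by linarith) hrpos
  intro N
  obtain ⟨n, hn, hae, hlt⟩ := hA N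
  refine ⟨n, hn, ?_⟩
  have h1 : dynN f U n ≤ ∏ b : Fin U.card, (traceFam f (Q b) n).card := hQb n
  have h2 : ∏ b : Fin U.card, (traceFam f (Q b) n).card ≤ (traceFam f (Q a) n).card ^ U.card := by
    calc ∏ b : Fin U.card, (traceFam f (Q b) n).card
        ≤ ∏ _b : Fin U.card, (traceFam f (Q a) n).card :=
          Finset.prod_le_prod (fun _ _ => Nat.zero_le _)
            (fun b _ => by rw [← hae]; exact hamax n b)
    _ = (traceFam f (Q a) n).card ^ U.card := by
          rw [Finset.prod_const, Finset.card_univ, Fintype.card_fin]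
  calc ((1:ℝ) + ε) ^ n < (dynN f U n : ℝ) := hlt
  _ ≤ ((traceFam f (Q a) n).card : ℝ) ^ U.card := by exact_mod_cast le_trans h1 h2

lemma limsup_zero_of_subexp (u : ℕ → ℕ)
    (h : ∀ ε : ℝ, 0 < ε → ∃ C : ℝ, 1 ≤ C ∧ ∀ n : ℕ, (u n : ℝ) ≤ C * (1 + ε) ^ n) :
    Filter.limsup (fun n : ℕ => ENNReal.ofReal (Real.log (u n)) / (n : ℝ≥0∞))
      Filter.atTop = 0 := by
  apply le_antisymm _ zero_le
  have KEY : ∀ ε : ℝ, 0 < ε →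
      Filter.limsup (fun n : ℕ => ENNReal.ofReal (Real.log (u n)) / (n : ℝ≥0∞)) Filter.atTop
        ≤ ENNReal.ofReal (Real.log (1 + ε)) := by
    intro ε hε
    obtain ⟨C, hC1, hC⟩ := h ε hε
    have hlogC : 0 ≤ Real.log C := Real.log_nonneg hC1
    have hlog1ε : 0 ≤ Real.log (1 + ε) := Real.log_nonneg (by linarith)
    have hbound : ∀ n : ℕ, 1 ≤ n →
        ENNReal.ofReal (Real.log (u n)) / (n : ℝ≥0∞)
          ≤ ENNReal.ofReal (Real.log C) / (n : ℝ≥0∞) + ENNReal.ofReal (Real.log (1 + ε)) := by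
      intro n hn
      have hne : (n : ℝ≥0∞) ≠ 0 := by
        simp only [ne_eq, Nat.cast_eq_zero]
        omega
      have hntop : (n : ℝ≥0∞) ≠ ⊤ := ENNReal.natCast_ne_top n
      have hlogu : Real.log (u n) ≤ Real.log C + n * Real.log (1 + ε) := by
        rcases Nat.eq_zero_or_pos (u n) with h0 | hpos
        · rw [h0]
          simp only [Nat.cast_zero, Real.log_zero]
          positivity
        · have h1 : (1:ℝ) ≤ (u n : ℝ) := by exact_mod_cast hpos
          have h2 : (u n : ℝ) ≤ C * (1 + ε) ^ n := hC n
          calc Real.log (u n) ≤ Real.log (C * (1 + ε) ^ n) :=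
                Real.log_le_log (by linarith) h2
          _ = Real.log C + Real.log ((1 + ε) ^ n) :=
                Real.log_mul (by linarith) (by positivity)
          _ = Real.log C + n * Real.log (1 + ε) := by rw [Real.log_pow]
      calc ENNReal.ofReal (Real.log (u n)) / (n : ℝ≥0∞)
          ≤ ENNReal.ofReal (Real.log C + n * Real.log (1 + ε)) / (n : ℝ≥0∞) :=
            ENNReal.div_le_div_right (ENNReal.ofReal_le_ofReal hlogu) _
      _ = (ENNReal.ofReal (Real.log C) + (n : ℝ≥0∞) * ENNReal.ofReal (Real.log (1 + ε)))
            / (n : ℝ≥0∞) := by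
            rw [ENNReal.ofReal_add hlogC (by positivity), ENNReal.ofReal_mul (by positivity)]
            rw [ENNReal.ofReal_natCast]
      _ = ENNReal.ofReal (Real.log C) / (n : ℝ≥0∞)
            + ((n : ℝ≥0∞) * ENNReal.ofReal (Real.log (1 + ε))) / (n : ℝ≥0∞) :=
            ENNReal.add_div
      _ = ENNReal.ofReal (Real.log C) / (n : ℝ≥0∞) + ENNReal.ofReal (Real.log (1 + ε)) := by
            rw [mul_comm ((n : ℝ≥0∞)) _, mul_div_assoc, ENNReal.div_self hne hntop, mul_one]
    apply ENNReal.le_of_forall_pos_le_add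
    intro η hη _
    obtain ⟨N, hN⟩ := exists_nat_gt (Real.log C / (η : ℝ))
    have hdiv : ∀ n : ℕ, N + 1 ≤ n →
        ENNReal.ofReal (Real.log C) / (n : ℝ≥0∞) ≤ (η : ℝ≥0∞) := by
      intro n hn
      have hne : (n : ℝ≥0∞) ≠ 0 := by
        simp only [ne_eq, Nat.cast_eq_zero]; omega
      have hntop : (n : ℝ≥0∞) ≠ ⊤ := ENNReal.natCast_ne_top n
      rw [ENNReal.div_le_iff_le_mul (Or.inl hne) (Or.inl hntop)]
      have hreal : Real.log C ≤ (η : ℝ) * n := by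
        have hηpos : (0:ℝ) < (η : ℝ) := hη
        have h1 : Real.log C / (η : ℝ) ≤ (n : ℝ) := by
          have h2 : (N : ℝ) ≤ (n : ℝ) := by exact_mod_cast (by omega : N ≤ n)
          linarith
        calc Real.log C = (Real.log C / (η : ℝ)) * (η : ℝ) := by field_simp
        _ ≤ (n : ℝ) * (η : ℝ) := mul_le_mul_of_nonneg_right h1 hηpos.le
        _ = (η : ℝ) * n := by ring
      calc ENNReal.ofReal (Real.log C) ≤ ENNReal.ofReal ((η : ℝ) * n) :=
            ENNReal.ofReal_le_ofReal hreal
      _ = (η : ℝ≥0∞) * (n : ℝ≥0∞) := by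
            rw [ENNReal.ofReal_mul (by positivity)]
            congr 1
            · exact ENNReal.ofReal_coe_nnreal
            · exact ENNReal.ofReal_natCast n
    apply Filter.limsup_le_of_le
    · isBoundedDefault
    · filter_upwards [Filter.eventually_ge_atTop (N + 1)] with n hn
      calc ENNReal.ofReal (Real.log (u n)) / (n : ℝ≥0∞)
          ≤ ENNReal.ofReal (Real.log C) / (n : ℝ≥0∞) + ENNReal.ofReal (Real.log (1 + ε)) :=
            hbound n (by omega)
      _ ≤ (η : ℝ≥0∞) + ENNReal.ofReal (Real.log (1 + ε)) :=
            add_le_add (hdiv n hn) le_rfl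
      _ = ENNReal.ofReal (Real.log (1 + ε)) + (η : ℝ≥0∞) := add_comm _ _
  apply ENNReal.le_of_forall_pos_le_add
  intro η hη _
  have hηpos : (0:ℝ) < (η : ℝ) := hη
  calc Filter.limsup (fun n : ℕ => ENNReal.ofReal (Real.log (u n)) / (n : ℝ≥0∞)) Filter.atTop
      ≤ ENNReal.ofReal (Real.log (1 + (η : ℝ))) := KEY (η : ℝ) hηpos
  _ ≤ ENNReal.ofReal (η : ℝ) := by
      apply ENNReal.ofReal_le_ofReal
      have := Real.log_le_sub_one_of_pos (show (0:ℝ) < 1 + (η:ℝ) by linarith)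
      linarith
  _ = (η : ℝ≥0∞) := ENNReal.ofReal_coe_nnreal
  _ ≤ 0 + (η : ℝ≥0∞) := by rw [zero_add]

/-- On a quasi-compact Noetherian topological space, the complexities of the joint covers
of a continuous self-map grow subexponentially; in particular the topological entropy
vanishes. -/
theorem stmt4 [TopologicalSpace X] [TopologicalSpace.NoetherianSpace X] [CompactSpace X]
    (f : X → X) (hf : Continuous f)
    (U : Finset (Set X)) (hopen : ∀ u ∈ U, IsOpen u)
    (hcov : ⋃₀ (U : Set (Set X)) = Set.univ) (ε : ℝ) (hε : 0 < ε) :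
    (∃ C : ℝ, 0 < C ∧ ∀ n : ℕ, (dynN f U n : ℝ) ≤ C * (1 + ε) ^ n) ∧
    coverEntropy f = 0 := by
  constructor
  · obtain ⟨C, hC1, hC⟩ := dynN_subexp f hf U hopen hcov hε
    exact ⟨C, lt_of_lt_of_le one_pos hC1, hC⟩
  · unfold coverEntropy
    apply le_antisymm _ zero_le
    refine iSup_le fun V => iSup_le fun hVopen => iSup_le fun hVcov => ?_
    rw [limsup_zero_of_subexp (dynN f V) (fun δ hδ => dynN_subexp f hf V hVopen hVcov hδ)]
end

section
/- If p(T) = T^N − T^{N−1} − M₁T^{N−N₁} − ⋯ − M_k T^{N−N_k} with positive reals M₁,…,M_k, integers 0 < N₁ < ⋯ < N_k = N, and if ε > 0 satisfies Mᵢ(1+ε)^{1−Nᵢ} ≤ ε/10^i for all i, then every complex root λ of p has |λ| < 1 + ε. -/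
open scoped BigOperators

/-- Root bound for the characteristic polynomial
`p(T) = T^N − T^{N−1} − M₁ T^{N−N₁} − ⋯ − M_k T^{N−N_k}` with positive reals `Mᵢ` and
integers `0 < N₁ < ⋯ < N_k = N`: if `ε > 0` satisfies `Mᵢ (1+ε)^{1−Nᵢ} ≤ ε/10^i` for
all `i`, then every complex root `λ` of `p` satisfies `|λ| < 1 + ε`. -/
theorem stmt5 (k : ℕ) (hk : 0 < k) (M : Fin k → ℝ) (hM : ∀ i, 0 < M i)
    (Nv : Fin k → ℕ) (hmono : StrictMono Nv) (h0 : 0 < Nv ⟨0, hk⟩)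
    (N : ℕ) (hlast : Nv ⟨k - 1, Nat.sub_lt hk Nat.one_pos⟩ = N)
    (ε : ℝ) (hε : 0 < ε)
    (hcond : ∀ i : Fin k, M i * (1 + ε) ^ ((1 : ℤ) - (Nv i : ℤ)) ≤ ε / 10 ^ ((i : ℕ) + 1))
    (lam : ℂ)
    (hroot : lam ^ N - lam ^ (N - 1) - ∑ i : Fin k, (M i : ℂ) * lam ^ (N - Nv i) = 0) :
    ‖lam‖ < 1 + ε := by
  by_contra hge
  push_neg at hge
  set r := ‖lam‖ with hr
  have hr1 : (1 : ℝ) ≤ r := le_trans (by linarith) hge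
  have hr0 : (0 : ℝ) < r := lt_of_lt_of_le one_pos hr1
  -- basic facts on Nv
  have hNle : ∀ i : Fin k, Nv i ≤ N := by
    intro i
    rw [← hlast]
    exact hmono.monotone (Fin.le_def.mpr (by simp; omega))
  have hNge : ∀ i : Fin k, 1 ≤ Nv i := by
    intro i
    have := hmono.monotone (Fin.le_def.mpr (by simp) : (⟨0, hk⟩ : Fin k) ≤ i)
    omega
  have hN1 : 1 ≤ N := le_trans (hNge _) (hNle ⟨0, hk⟩)
  -- triangle inequality
  have htri : r ^ N ≤ r ^ (N - 1) + ∑ i : Fin k, M i * r ^ (N - Nv i) := by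
    have heq : lam ^ N = lam ^ (N - 1) + ∑ i : Fin k, (M i : ℂ) * lam ^ (N - Nv i) := by
      linear_combination hroot
    calc r ^ N = ‖lam ^ N‖ := (norm_pow _ _).symm
      _ = ‖lam ^ (N - 1) + ∑ i : Fin k, (M i : ℂ) * lam ^ (N - Nv i)‖ := by
          rw [heq]
      _ ≤ ‖lam ^ (N - 1)‖ +
          ‖∑ i : Fin k, (M i : ℂ) * lam ^ (N - Nv i)‖ := by
          exact norm_add_le _ _
      _ ≤ r ^ (N - 1) + ∑ i : Fin k, M i * r ^ (N - Nv i) := by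
          gcongr
          · rw [norm_pow]
          · calc ‖∑ i : Fin k, (M i : ℂ) * lam ^ (N - Nv i)‖
                ≤ ∑ i : Fin k, ‖(M i : ℂ) * lam ^ (N - Nv i)‖ :=
                  norm_sum_le _ _
              _ = ∑ i : Fin k, M i * r ^ (N - Nv i) := by
                  refine Finset.sum_congr rfl fun i _ => ?_
                  rw [norm_mul, norm_pow, Complex.norm_real, Real.norm_of_nonneg (hM i).le]
  -- divide by r^(N-1)
  have hpow : (0:ℝ) < r ^ (N - 1) := pow_pos hr0 _
  have e2 : ∀ i : Fin k, (M i * r ^ ((1:ℤ) - (Nv i : ℤ))) * r ^ (N - 1)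
      = M i * r ^ (N - Nv i) := by
    intro i
    rw [mul_assoc]
    congr 1
    rw [← zpow_natCast r (N - 1), ← zpow_add₀ (ne_of_gt hr0), ← zpow_natCast r (N - Nv i)]
    congr 1
    have h1 := hNle i; have h2 := hNge i
    omega
  have hdiv : r ≤ 1 + ∑ i : Fin k, M i * r ^ ((1:ℤ) - (Nv i : ℤ)) := by
    refine le_of_mul_le_mul_right ?_ hpow
    have e1 : r * r ^ (N - 1) = r ^ N := by
      rw [← pow_succ']
      congr 1
      omega
    rw [e1, add_mul, one_mul, Finset.sum_mul]
    simpa only [e2] using htri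
  -- bound each term
  have hstep : ∀ i : Fin k, M i * r ^ ((1:ℤ) - (Nv i : ℤ)) ≤ ε / 10 ^ ((i:ℕ)+1) := by
    intro i
    refine le_trans ?_ (hcond i)
    refine mul_le_mul_of_nonneg_left ?_ (hM i).le
    have hm : (1:ℤ) - (Nv i : ℤ) = -((Nv i - 1 : ℕ) : ℤ) := by
      have := hNge i; omega
    rw [hm, zpow_neg, zpow_neg, zpow_natCast, zpow_natCast]
    exact inv_anti₀ (pow_pos (by linarith) _) (pow_le_pow_left₀ (by linarith) hge _)
  -- sum is < ε
  have hgeom : ∀ n : ℕ, ∑ i ∈ Finset.range n, ε / 10 ^ (i+1) ≤ ε * (1 - (1/10:ℝ)^n) := by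
    intro n
    induction n with
    | zero => simp
    | succ n ih =>
      rw [Finset.sum_range_succ]
      have hx : (1/10:ℝ)^n * 10^n = 1 := by
        rw [div_pow, one_pow, div_mul_cancel₀]
        positivity
      have hp : (0:ℝ) < 10 ^ n := by positivity
      have e3 : (10:ℝ) ^ (n+1) = 10^n * 10 := by ring
      have e4 : (1/10:ℝ) ^ (n+1) = (1/10)^n * (1/10) := by ring
      rw [e3, e4]
      rw [div_mul_eq_div_div]
      have e5 : ε / 10 ^ n = ε * (1/10:ℝ)^n := by
        rw [div_pow, one_pow, mul_one_div]
      rw [e5]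
      nlinarith [ih, mul_pos hε (pow_pos (show (0:ℝ) < 1/10 by norm_num) n)]
  have hsum : ∑ i : Fin k, ε / 10 ^ ((i:ℕ)+1) < ε := by
    rw [Fin.sum_univ_eq_sum_range (fun i => ε / 10 ^ (i+1)) k]
    refine lt_of_le_of_lt (hgeom k) ?_
    have : (0:ℝ) < (1/10:ℝ)^k := by positivity
    nlinarith
  have : r ≤ 1 + ∑ i : Fin k, ε / 10 ^ ((i:ℕ)+1) :=
    le_trans hdiv (by gcongr with i _; exact hstep i)
  linarith
end

section
/- Every finite Radon measure μ on a Noetherian Priestley space (X, τ, ≤) is atomic: there is a countable set F ⊆ X with μ = Σ_{x∈F} μ({x}) δ_x. -/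
open Set MeasureTheory
open scoped ENNReal

/-- Every finite Radon (inner regular) Borel measure on a Noetherian Priestley space
`(X, τ, ≤)` is atomic: there is a countable set `F` such that `μ = Σ_{x∈F} μ({x}) δ_x`,
i.e. `μ s = Σ_{x ∈ s ∩ F} μ({x})` for every Borel set `s`.

A Priestley space is a compact topological poset in which `y ≰ x` is separated by a
clopen down-set containing `x` but not `y`; Noetherian means every decreasing sequence
of closed down-sets stabilizes. -/
theorem stmt6 {X : Type*} [TopologicalSpace X] [PartialOrder X] [CompactSpace X]
    [MeasurableSpace X] [BorelSpace X]
    (hpriest : ∀ x y : X, ¬ y ≤ x →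
      ∃ U : Set X, IsClopen U ∧ IsLowerSet U ∧ x ∈ U ∧ y ∉ U)
    (hnoeth : ∀ C : ℕ → Set X, (∀ n, IsClosed (C n) ∧ IsLowerSet (C n)) →
      (∀ n, C (n + 1) ⊆ C n) → ∃ N, ∀ n ≥ N, C n = C N)
    (μ : Measure X) [IsFiniteMeasure μ] [μ.InnerRegular] :
    ∃ F : Set X, F.Countable ∧
      ∀ s : Set X, MeasurableSet s → μ s = ∑' x : ↥(s ∩ F), μ {(x : X)} := by
  classical
  -- The space is Hausdorff, hence singletons are measurable.
  have ht2 : T2Space X := by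
    constructor
    intro x y hxy
    have h : ¬ y ≤ x ∨ ¬ x ≤ y := by
      by_contra h
      push_neg at h
      exact hxy (le_antisymm h.2 h.1)
    rcases h with h | h
    · obtain ⟨U, hUc, -, hxU, hyU⟩ := hpriest x y h
      exact ⟨U, Uᶜ, hUc.isOpen, hUc.isClosed.isOpen_compl, hxU, hyU, disjoint_compl_right⟩
    · obtain ⟨U, hUc, -, hyU, hxU⟩ := hpriest y x h
      exact ⟨Uᶜ, U, hUc.isClosed.isOpen_compl, hUc.isOpen, hxU, hyU, disjoint_compl_left⟩
  have hms : MeasurableSingletonClass X := inferInstance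
  -- Existence of minimal closed down-sets satisfying a property, from Noetherianity.
  have exists_min : ∀ P : Set X → Prop, (∀ D, P D → IsClosed D ∧ IsLowerSet D) →
      (∃ D, P D) → ∃ D, P D ∧ ∀ D', P D' → D' ⊆ D → D' = D := by
    intro P hcl hne
    obtain ⟨D0, hD0⟩ := hne
    by_contra h
    push_neg at h
    have h' : ∀ D : {D // P D}, ∃ D' : {D // P D}, D'.1 ⊆ D.1 ∧ D'.1 ≠ D.1 := by
      rintro ⟨D, hD⟩
      obtain ⟨D', hD', hsub, hne'⟩ := h D hD
      exact ⟨⟨D', hD'⟩, hsub, hne'⟩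
    choose g hg1 hg2 using h'
    set C : ℕ → {D // P D} := fun n => g^[n] ⟨D0, hD0⟩ with hC
    have hCsucc : ∀ n, C (n + 1) = g (C n) := by
      intro n; simp [hC, Function.iterate_succ_apply']
    obtain ⟨N, hN⟩ := hnoeth (fun n => (C n).1)
      (fun n => hcl _ (C n).2) (fun n => by show (C (n+1)).1 ⊆ (C n).1; rw [hCsucc n]; exact hg1 (C n))
    have := hN (N + 1) (by omega)
    rw [hCsucc N] at this
    exact hg2 (C N) this
  -- Key lemma: every measurable set of nonzero measure contains an atom.
  have key : ∀ s : Set X, MeasurableSet s → μ s ≠ 0 → ∃ x ∈ s, μ {x} ≠ 0 := by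
    intro s hs hμs
    obtain ⟨D, ⟨hDc, hDl, hDμ⟩, hmin⟩ :=
      exists_min (fun D => IsClosed D ∧ IsLowerSet D ∧ μ (s ∩ D) ≠ 0)
        (fun D h => ⟨h.1, h.2.1⟩)
        ⟨univ, isClosed_univ, isLowerSet_univ, by simpa using hμs⟩
    -- find a top element x of D by compactness
    obtain ⟨x, hxD, hx⟩ : ∃ x ∈ D,
        ∀ U : Set X, IsClopen U → IsLowerSet U → ¬ D ⊆ U → x ∉ U := by
      set ι := {U : Set X // IsClopen U ∧ IsLowerSet U ∧ ¬ D ⊆ U} with hι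
      have hne : (D ∩ ⋂ i : ι, (i : Set X)ᶜ).Nonempty := by
        apply hDc.isCompact.inter_iInter_nonempty
        · intro i; exact i.2.1.isOpen.isClosed_compl
        · intro u
          by_contra hcon
          rw [not_nonempty_iff_eq_empty] at hcon
          have hsub : s ∩ D ⊆ ⋃ i ∈ u, s ∩ (D ∩ (i : Set X)) := by
            rintro y ⟨hys, hyD⟩
            have : y ∉ ⋂ i ∈ u, ((i : Set X))ᶜ := by
              intro hy
              have : y ∈ D ∩ ⋂ i ∈ u, ((i : Set X))ᶜ := ⟨hyD, hy⟩
              rw [hcon] at this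
              exact this
            simp only [mem_iInter, mem_compl_iff, not_forall, not_not] at this
            obtain ⟨i, hiu, hyi⟩ := this
            exact mem_biUnion hiu ⟨hys, hyD, hyi⟩
          have hle : μ (s ∩ D) ≤ ∑ i ∈ u, μ (s ∩ (D ∩ (i : Set X))) :=
            le_trans (measure_mono hsub) (measure_biUnion_finset_le u _)
          have : ∃ i ∈ u, μ (s ∩ (D ∩ (i : Set X))) ≠ 0 := by
            by_contra hall
            push_neg at hall
            rw [Finset.sum_eq_zero hall] at hle
            exact hDμ (le_antisymm hle zero_le)
          obtain ⟨i, -, hi⟩ := this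
          have heq : D ∩ (i : Set X) = D :=
            hmin _ ⟨hDc.inter i.2.1.isClosed, hDl.inter i.2.2.1, hi⟩ inter_subset_left
          apply i.2.2.2
          intro y hy
          rw [← heq] at hy
          exact hy.2
      obtain ⟨x, hxD, hx⟩ := hne
      refine ⟨x, hxD, fun U hUc hUl hUs hxU => ?_⟩
      have := mem_iInter.1 hx ⟨U, hUc, hUl, hUs⟩
      exact this hxU
    -- D ⊆ ↓x
    have hDx : D ⊆ Iic x := by
      intro y hyD
      by_contra hyx
      obtain ⟨U, hUc, hUl, hxU, hyU⟩ := hpriest x y hyx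
      exact hx U hUc hUl (fun h => hyU (h hyD)) hxU
    -- the atom is x
    have hμx : μ (s ∩ {x}) ≠ 0 := by
      intro h0
      have hA : μ (s ∩ (D \ {x})) ≠ 0 := by
        intro h0'
        apply hDμ
        have : s ∩ D ⊆ (s ∩ (D \ {x})) ∪ (s ∩ {x}) := by
          rintro y ⟨hys, hyD⟩
          by_cases hy : y = x
          · exact Or.inr ⟨hys, hy⟩
          · exact Or.inl ⟨hys, hyD, hy⟩
        have := le_trans (measure_mono this) (measure_union_le (μ := μ) _ _)
        rw [h0', h0, add_zero] at this
        exact le_antisymm this zero_le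
      have hAm : MeasurableSet (s ∩ (D \ {x})) :=
        hs.inter (hDc.measurableSet.diff (measurableSet_singleton x))
      obtain ⟨K, hKA, hKc, hKμ⟩ := hAm.exists_lt_isCompact (pos_iff_ne_zero.2 hA)
      -- cover K by clopen down-sets avoiding x
      have hUex : ∀ y, y ∈ K → ∃ U : Set X, IsClopen U ∧ IsLowerSet U ∧ y ∈ U ∧ x ∉ U := by
        intro y hy
        obtain ⟨hys, hyD, hyx⟩ := hKA hy
        apply hpriest y x
        intro hxy
        exact hyx (le_antisymm (hDx hyD) hxy)
      choose! U hU1 hU2 hU3 hU4 using hUex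
      obtain ⟨t, htK, htcov⟩ := hKc.elim_nhds_subcover U
        (fun y hy => (hU1 y hy).isOpen.mem_nhds (hU3 y hy))
      set V : Set X := ⋃ y ∈ t, U y with hV
      have hVc : IsClopen V := by
        constructor
        · exact t.finite_toSet.isClosed_biUnion (fun y hy => (hU1 y (htK y hy)).isClosed)
        · exact isOpen_biUnion (fun y hy => (hU1 y (htK y hy)).isOpen)
      have hVl : IsLowerSet V := isLowerSet_iUnion₂ (fun y hy => hU2 y (htK y hy))
      have hxV : x ∉ V := by
        simp only [hV, mem_iUnion, not_exists]
        exact fun y hy => hU4 y (htK y hy)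
      have hμV : μ (s ∩ (D ∩ V)) ≠ 0 := by
        have hKsub : K ⊆ s ∩ (D ∩ V) :=
          fun y hy => ⟨(hKA hy).1, (hKA hy).2.1, htcov hy⟩
        intro h0'
        exact absurd (le_antisymm (le_trans (measure_mono hKsub) h0'.le) zero_le)
          (by simpa using hKμ.ne')
      have heq : D ∩ V = D :=
        hmin _ ⟨hDc.inter hVc.isClosed, hDl.inter hVl, hμV⟩ inter_subset_left
      apply hxV
      have : x ∈ D ∩ V := by rw [heq]; exact hxD
      exact this.2
    have hxs : x ∈ s := by
      have hne : (s ∩ {x}).Nonempty :=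
        nonempty_iff_ne_empty.2 (fun h => hμx (by rw [h]; exact measure_empty))
      obtain ⟨y, hys, hyx⟩ := hne
      rwa [show y = x from hyx] at hys
    exact ⟨x, hxs, fun h => hμx (le_antisymm
      (le_trans (measure_mono inter_subset_right) h.le) zero_le)⟩
  -- assemble
  refine ⟨{x | μ {x} ≠ 0}, ?_, ?_⟩
  · have := Measure.countable_meas_pos_of_disjoint_iUnion (μ := μ)
      (As := fun x : X => ({x} : Set X)) (fun x => measurableSet_singleton x)
      (fun a b hab => disjoint_singleton.2 hab)
    apply this.mono
    intro x hx
    exact pos_iff_ne_zero.2 hx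
  · intro s hs
    set F : Set X := {x | μ {x} ≠ 0} with hF
    have hFc : F.Countable := by
      have := Measure.countable_meas_pos_of_disjoint_iUnion (μ := μ)
        (As := fun x : X => ({x} : Set X)) (fun x => measurableSet_singleton x)
        (fun a b hab => disjoint_singleton.2 hab)
      exact this.mono (fun x hx => pos_iff_ne_zero.2 hx)
    have hFm : MeasurableSet F := hFc.measurableSet
    have hdiff : μ (s \ F) = 0 := by
      by_contra h
      obtain ⟨x, hxs, hx⟩ := key (s \ F) (hs.diff hFm) h
      exact hxs.2 hx
    have hsum : μ (s ∩ F) = ∑' x : ↥(s ∩ F), μ {(x : X)} := by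
      have hcnt : (s ∩ F).Countable := hFc.mono inter_subset_right
      conv_lhs => rw [← biUnion_of_singleton (s ∩ F)]
      exact measure_biUnion hcnt
        (fun a _ b _ hab => disjoint_singleton.2 hab)
        (fun b _ => measurableSet_singleton b)
    rw [← measure_inter_add_diff s hFm, hdiff, add_zero, hsum]
end

section
/- Every finite Radon measure without atoms on a Noetherian Priestley space is the zero measure. Equivalently, every Radon probability measure on a Noetherian Priestley space has at least one atom. -/
open Set MeasureTheory
open scoped ENNReal

/-- On a Noetherian Priestley space: every finite Radon (inner regular) Borel measure
without atoms is the zero measure; equivalently, every Radon probability measure has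
at least one atom. -/
theorem stmt7 {X : Type*} [TopologicalSpace X] [PartialOrder X] [CompactSpace X]
    [MeasurableSpace X] [BorelSpace X]
    (hpriest : ∀ x y : X, ¬ y ≤ x →
      ∃ U : Set X, IsClopen U ∧ IsLowerSet U ∧ x ∈ U ∧ y ∉ U)
    (hnoeth : ∀ C : ℕ → Set X, (∀ n, IsClosed (C n) ∧ IsLowerSet (C n)) →
      (∀ n, C (n + 1) ⊆ C n) → ∃ N, ∀ n ≥ N, C n = C N) :
    (∀ μ : Measure X, μ.InnerRegular → IsFiniteMeasure μ →
      (∀ x : X, μ {x} = 0) → μ = 0) ∧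
    (∀ μ : Measure X, μ.InnerRegular → IsProbabilityMeasure μ →
      ∃ x : X, 0 < μ {x}) := by
  -- the space is T2
  haveI hT2 : T2Space X := by
    constructor
    intro x y hxy
    by_cases h : y ≤ x
    · have h' : ¬ x ≤ y := fun h2 => hxy (le_antisymm h2 h)
      obtain ⟨U, hU, -, hyU, hxU⟩ := hpriest y x h'
      exact ⟨Uᶜ, U, hU.compl.2, hU.2, hxU, hyU, disjoint_compl_left⟩
    · obtain ⟨U, hU, -, hxU, hyU⟩ := hpriest x y h
      exact ⟨U, Uᶜ, hU.2, hU.compl.2, hxU, hyU, disjoint_compl_right⟩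
  have main : ∀ μ : Measure X, μ.InnerRegular → IsFiniteMeasure μ →
      (∀ x : X, μ {x} = 0) → μ = 0 := by
    intro μ hreg hfin hatom
    by_contra hμ
    haveI := hreg
    -- the family of closed lower sets of positive measure
    set S : Set (Set X) := {C | IsClosed C ∧ IsLowerSet C ∧ 0 < μ C} with hS
    have hXS : (univ : Set X) ∈ S := by
      refine ⟨isClosed_univ, fun _ _ _ _ => trivial, ?_⟩
      rw [pos_iff_ne_zero]
      simpa using hμ
    -- S has a minimal element, by the Noetherian hypothesis
    have hmin : ∃ C ∈ S, ∀ D ∈ S, D ⊆ C → D = C := by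
      by_contra hc
      push_neg at hc
      have step : ∀ C : {C // C ∈ S}, ∃ D : {C // C ∈ S}, D.1 ⊆ C.1 ∧ D.1 ≠ C.1 := by
        rintro ⟨C, hC⟩
        obtain ⟨D, hD, hDC, hne⟩ := hc C hC
        exact ⟨⟨D, hD⟩, hDC, hne⟩
      choose g hg1 hg2 using step
      set seq : ℕ → {C // C ∈ S} := fun n => g^[n] ⟨univ, hXS⟩ with hseq
      have hseqsucc : ∀ n, seq (n + 1) = g (seq n) := fun n =>
        Function.iterate_succ_apply' g n _
      obtain ⟨N, hN⟩ := hnoeth (fun n => (seq n).1)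
        (fun n => ⟨(seq n).2.1, (seq n).2.2.1⟩)
        (fun n => by show ((seq (n+1)) : Set X) ⊆ (seq n : Set X); rw [hseqsucc]; exact hg1 _)
      have h1 : ((seq (N+1)) : Set X) = (seq N : Set X) := hN (N + 1) (Nat.le_succ N)
      rw [hseqsucc] at h1
      exact hg2 (seq N) h1
    obtain ⟨C, ⟨hCc, hCl, hCpos⟩, hCmin⟩ := hmin
    -- every proper closed lower subset of C is null
    have hnull : ∀ D : Set X, IsClosed D → IsLowerSet D → D ⊆ C → D ≠ C → μ D = 0 := by
      intro D hDc hDl hDC hne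
      by_contra h
      exact hne (hCmin D ⟨hDc, hDl, pos_iff_ne_zero.mpr h⟩ hDC)
    -- key covering lemma: a compact subset of C covered by null clopen-lower pieces is null
    have key : ∀ K : Set X, IsCompact K → K ⊆ C →
        (∀ z ∈ K, ∃ U : Set X, IsClopen U ∧ IsLowerSet U ∧ z ∈ U ∧ μ (C ∩ U) = 0) →
        μ K = 0 := by
      intro K hK hKC hcov
      set ι := {U : Set X // IsClopen U ∧ IsLowerSet U ∧ μ (C ∩ U) = 0} with hι
      obtain ⟨t, ht⟩ := hK.elim_finite_subcover (fun i : ι => i.1)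
        (fun i => i.2.1.2)
        (by
          intro z hz
          obtain ⟨U, h1, h2, h3, h4⟩ := hcov z hz
          exact mem_iUnion.mpr ⟨⟨U, h1, h2, h4⟩, h3⟩)
      have hK2 : K ⊆ ⋃ i ∈ t, C ∩ i.1 := by
        intro z hz
        obtain ⟨i, hi, hzi⟩ := mem_iUnion₂.mp (ht hz)
        exact mem_iUnion₂.mpr ⟨i, hi, hKC hz, hzi⟩
      have hle : μ K ≤ 0 :=
        calc μ K ≤ μ (⋃ i ∈ t, C ∩ i.1) := measure_mono hK2
          _ ≤ ∑ i ∈ t, μ (C ∩ i.1) := measure_biUnion_finset_le t _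
          _ = 0 := Finset.sum_eq_zero fun i _ => i.2.2.2
      exact le_antisymm hle zero_le
    -- case split: whether C has a top element
    by_cases htop : ∃ y ∈ C, C ⊆ {z | z ≤ y}
    · obtain ⟨y, hyC, hCy⟩ := htop
      have hCy' : μ (C \ {y}) = μ C := by
        have := measure_diff_null (s := C) (hatom y)
        simpa using this
      obtain ⟨K, hKsub, hKcomp, hKpos⟩ :=
        (hCc.measurableSet.diff (measurableSet_singleton y)).exists_lt_isCompact
          (by rw [hCy']; exact hCpos)
      have : μ K = 0 := by
        refine key K hKcomp (hKsub.trans diff_subset) ?_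
        intro z hz
        obtain ⟨hzC, hzy⟩ := hKsub hz
        have hzly : z ≤ y := hCy hzC
        have hnle : ¬ y ≤ z := fun h => hzy (le_antisymm hzly h ▸ rfl)
        obtain ⟨U, hU1, hU2, hU3, hU4⟩ := hpriest z y hnle
        refine ⟨U, hU1, hU2, hU3, hnull _ (hCc.inter hU1.1) (fun a b hba ⟨haC, haU⟩ =>
          ⟨hCl hba haC, hU2 hba haU⟩) inter_subset_left ?_⟩
        intro h
        have : y ∈ C ∩ U := by rw [h]; exact hyC
        exact hU4 this.2
      exact absurd this hKpos.ne'
    · push_neg at htop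
      obtain ⟨K, hKsub, hKcomp, hKpos⟩ := hCc.measurableSet.exists_lt_isCompact hCpos
      have : μ K = 0 := by
        refine key K hKcomp hKsub ?_
        intro z hz
        have hzC := hKsub hz
        obtain ⟨w, hwC, hwz⟩ := not_subset.mp (htop z hzC)
        obtain ⟨U, hU1, hU2, hU3, hU4⟩ := hpriest z w hwz
        refine ⟨U, hU1, hU2, hU3, hnull _ (hCc.inter hU1.1) (fun a b hba ⟨haC, haU⟩ =>
          ⟨hCl hba haC, hU2 hba haU⟩) inter_subset_left ?_⟩
        intro h
        have : w ∈ C ∩ U := by rw [h]; exact hwC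
        exact hU4 this.2
      exact absurd this hKpos.ne'
  refine ⟨main, ?_⟩
  intro μ hreg hprob
  by_contra h
  push_neg at h
  have h0 : ∀ x : X, μ {x} = 0 := fun x => le_antisymm (h x) zero_le
  have := main μ hreg (by infer_instance) h0
  have h1 : μ univ = 1 := measure_univ
  rw [this] at h1
  simp at h1
end

section
/- Let (X,≤) be a partially ordered set, and let τ_≤ be the topology generated by the sets K_x = {y : y ≤ x} and their complements. If (X, τ_≤) is compact, then: (X,≤) satisfies the descending chain condition; there is a finite set F ⊆ X with X = ⋃_{x∈F} K_x; and for all x, y ∈ X there is a finite set F(x,y) with K_x ∩ K_y = ⋃_{z∈F(x,y)} K_z. Conversely, these three conditions imply that (X, τ_≤) is compact. -/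
open Set

/-- For a poset `(X,≤)` let `τ_≤` be the topology generated by the principal down-sets
`K_x = {y : y ≤ x}` and their complements. Then `(X, τ_≤)` is compact if and only if:
`(X,≤)` satisfies the descending chain condition; `X` is a finite union of principal
down-sets; and any intersection `K_x ∩ K_y` is a finite union of principal down-sets. -/
theorem stmt9 {X : Type*} [PartialOrder X] :
    @CompactSpace X
        (TopologicalSpace.generateFrom
          {s : Set X | ∃ x : X, s = {y | y ≤ x} ∨ s = {y | y ≤ x}ᶜ}) ↔
    ((∀ u : ℕ → X, (∀ n, u (n + 1) ≤ u n) → ∃ N, ∀ n ≥ N, u n = u N) ∧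
      (∃ F : Finset X, ∀ y : X, ∃ x ∈ F, y ≤ x) ∧
      (∀ x y : X, ∃ F : Finset X,
        {z : X | z ≤ x} ∩ {z : X | z ≤ y} = ⋃ w ∈ F, {z : X | z ≤ w})) := by
  classical
  letI T : TopologicalSpace X := TopologicalSpace.generateFrom
    {s : Set X | ∃ x : X, s = {y | y ≤ x} ∨ s = {y | y ≤ x}ᶜ}
  have hIic : ∀ x : X, Iic x = {y | y ≤ x} := fun x => rfl
  have hopen : ∀ x : X, IsOpen (Iic x) :=
    fun x => TopologicalSpace.isOpen_generateFrom_of_mem ⟨x, Or.inl rfl⟩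
  have hopenc : ∀ x : X, IsOpen (Iic x)ᶜ :=
    fun x => TopologicalSpace.isOpen_generateFrom_of_mem ⟨x, Or.inr rfl⟩
  constructor
  · intro hcomp
    refine ⟨?_, ?_, ?_⟩
    · -- descending chain condition
      intro u hu
      have hanti : Antitone u := antitone_nat_of_succ_le hu
      set W : Set X := ⋂ n, Iic (u n) with hW
      have hWopen : IsOpen W := by
        have : W = ⋃ z ∈ W, Iic z := by
          apply Subset.antisymm
          · exact fun z hz => mem_biUnion hz le_rfl
          · intro y hy
            rcases mem_iUnion₂.1 hy with ⟨z, hz, hyz⟩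
            exact mem_iInter.2 fun n => le_trans hyz (mem_iInter.1 hz n)
        rw [this]
        exact isOpen_biUnion fun z _ => hopen z
      have hcov : univ ⊆ ⋃ n : ℕ, (W ∪ (Iic (u n))ᶜ) := by
        intro x _
        by_cases hx : ∀ n, x ≤ u n
        · exact mem_iUnion.2 ⟨0, Or.inl (mem_iInter.2 hx)⟩
        · push_neg at hx
          obtain ⟨n, hn⟩ := hx
          exact mem_iUnion.2 ⟨n, Or.inr hn⟩
      obtain ⟨t, ht⟩ := isCompact_univ.elim_finite_subcover
        (fun n : ℕ => W ∪ (Iic (u n))ᶜ) (fun n => hWopen.union (hopenc (u n))) hcov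
      set N := t.sup id with hN
      have hmem : ∀ m, N ≤ m → u m ∈ W := by
        intro m hm
        rcases mem_iUnion₂.1 (ht (mem_univ (u m))) with ⟨n, hn, hun⟩
        rcases hun with h | h
        · exact h
        · exact absurd (hanti (le_trans (Finset.le_sup (f := id) hn) hm)) h
      refine ⟨N, fun n hn => ?_⟩
      exact le_antisymm (mem_iInter.1 (hmem n hn) N) (mem_iInter.1 (hmem N le_rfl) n)
    · -- finite cover
      obtain ⟨t, ht⟩ := isCompact_univ.elim_finite_subcover (fun x : X => Iic x)
        (fun x => hopen x) (fun x _ => mem_iUnion.2 ⟨x, le_rfl⟩)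
      refine ⟨t, fun y => ?_⟩
      rcases mem_iUnion₂.1 (ht (mem_univ y)) with ⟨x, hx, hyx⟩
      exact ⟨x, hx, hyx⟩
    · -- intersections
      intro x y
      set C : Set X := Iic x ∩ Iic y with hC
      have hCclosed : IsClosed C := by
        rw [← isOpen_compl_iff, compl_inter]
        exact (hopenc x).union (hopenc y)
      have hCcomp : IsCompact C := hCclosed.isCompact
      obtain ⟨t, ht⟩ := hCcomp.elim_finite_subcover (fun z : C => Iic (z : X))
        (fun z => hopen _) (fun z hz => mem_iUnion.2 ⟨⟨z, hz⟩, le_rfl⟩)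
      refine ⟨t.image Subtype.val, ?_⟩
      apply Subset.antisymm
      · intro z hz
        rcases mem_iUnion₂.1 (ht hz) with ⟨w, hw, hzw⟩
        exact mem_iUnion₂.2 ⟨(w : X), Finset.mem_image_of_mem _ hw, hzw⟩
      · intro z hz
        rcases mem_iUnion₂.1 hz with ⟨w, hw, hzw⟩
        rcases Finset.mem_image.1 hw with ⟨w', _, rfl⟩
        exact ⟨le_trans hzw w'.2.1, le_trans hzw w'.2.2⟩
  · rintro ⟨hdcc, ⟨F0, hF0⟩, hinter⟩
    have hwf : WellFounded ((· < ·) : X → X → Prop) := by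
      rw [RelEmbedding.wellFounded_iff_isEmpty]
      refine ⟨fun f => ?_⟩
      obtain ⟨N, hN⟩ := hdcc (fun n => f n)
        (fun n => (f.map_rel_iff.2 (Nat.lt_succ_self n)).le)
      exact (f.map_rel_iff.2 (Nat.lt_succ_self N)).ne (hN (N + 1) (Nat.le_succ N))
    refine ⟨isCompact_iff_ultrafilter_le_nhds.2 fun 𝒰 _ => ?_⟩
    set B : Set X := {x : X | Iic x ∈ 𝒰} with hB
    have hBne : B.Nonempty := by
      have h1 : (⋃ x ∈ (F0 : Set X), Iic x) ∈ 𝒰 := by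
        refine Filter.mem_of_superset Filter.univ_mem ?_
        intro y _
        obtain ⟨x, hx, hyx⟩ := hF0 y
        exact mem_biUnion hx hyx
      rcases (Ultrafilter.finite_biUnion_mem_iff F0.finite_toSet).1 h1 with ⟨x, _, hx⟩
      exact ⟨x, hx⟩
    obtain ⟨m, hm, hmin⟩ := hwf.has_min B hBne
    have hleast : ∀ x ∈ B, m ≤ x := by
      intro x hx
      obtain ⟨Fz, hFz⟩ := hinter m x
      have h2 : ({z : X | z ≤ m} ∩ {z : X | z ≤ x}) ∈ 𝒰 :=
        Filter.inter_mem hm hx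
      rw [hFz] at h2
      rcases (Ultrafilter.finite_biUnion_mem_iff Fz.finite_toSet).1 h2 with ⟨z, hzF, hz⟩
      have hzB : z ∈ B := hz
      have hzmx : z ≤ m ∧ z ≤ x := by
        have : z ∈ ({z : X | z ≤ m} ∩ {z : X | z ≤ x}) := by
          rw [hFz]; exact mem_biUnion hzF (le_refl z)
        exact this
      rcases eq_or_lt_of_le hzmx.1 with h | h
      · exact h ▸ hzmx.2
      · exact absurd h (hmin z hzB)
    refine ⟨m, mem_univ m, ?_⟩
    rw [TopologicalSpace.nhds_generateFrom]
    refine le_iInf fun s => le_iInf fun hs => ?_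
    rw [Filter.le_principal_iff]
    obtain ⟨hms, x, hsx | hsx⟩ := hs
    · subst hsx
      exact Filter.mem_of_superset hm (fun z (hz : z ≤ m) => le_trans hz hms)
    · subst hsx
      rw [Ultrafilter.mem_coe, ← Ultrafilter.compl_notMem_iff, compl_compl]
      intro hxB
      exact hms (hleast x hxB)
end

section
/- Let (X,≤) be a poset such that (X, τ_≤) is compact, where τ_≤ is the topology generated by the principal down-sets K_x and their complements. Then (X, τ_≤, ≤) is a Noetherian Priestley space: it is a Priestley space, and every decreasing sequence of closed down-sets stabilizes. -/
open Set

/-- Let `(X,≤)` be a poset and `τ_≤` the topology generated by the principal down-sets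
`K_x` and their complements. If `(X, τ_≤)` is compact, then `(X, τ_≤, ≤)` is a
Noetherian Priestley space: whenever `y ≰ x` there is a clopen down-set containing `x`
but not `y`, and every decreasing sequence of closed down-sets stabilizes. -/
theorem stmt10 {X : Type*} [PartialOrder X]
    (t : TopologicalSpace X)
    (ht : t = TopologicalSpace.generateFrom
      {s : Set X | ∃ x : X, s = {y | y ≤ x} ∨ s = {y | y ≤ x}ᶜ})
    (hcomp : @CompactSpace X t) :
    (∀ x y : X, ¬ y ≤ x →
      ∃ U : Set X, @IsClopen X t U ∧ IsLowerSet U ∧ x ∈ U ∧ y ∉ U) ∧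
    (∀ C : ℕ → Set X, (∀ n, @IsClosed X t (C n) ∧ IsLowerSet (C n)) →
      (∀ n, C (n + 1) ⊆ C n) → ∃ N, ∀ n ≥ N, C n = C N) := by
  subst ht
  letI : TopologicalSpace X := TopologicalSpace.generateFrom
    {s : Set X | ∃ x : X, s = {y | y ≤ x} ∨ s = {y | y ≤ x}ᶜ}
  haveI := hcomp
  have hKopen : ∀ x : X, IsOpen {y : X | y ≤ x} := fun x =>
    TopologicalSpace.isOpen_generateFrom_of_mem ⟨x, Or.inl rfl⟩
  have hKcopen : ∀ x : X, IsOpen {y : X | y ≤ x}ᶜ := fun x =>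
    TopologicalSpace.isOpen_generateFrom_of_mem ⟨x, Or.inr rfl⟩
  constructor
  · intro x y hxy
    refine ⟨{z | z ≤ x}, ⟨isOpen_compl_iff.mp (hKcopen x), hKopen x⟩,
      fun a b hba ha => hba.trans ha, le_refl x, hxy⟩
  · intro C hC hdec
    by_contra h
    push_neg at h
    have mono : Antitone C := antitone_nat_of_succ_le hdec
    have key : ∀ N : ℕ, ∃ (m : ℕ) (x : X), N ≤ m ∧ x ∈ C N ∧ x ∉ C m := by
      intro N
      obtain ⟨m, hm, hne⟩ := h N
      by_contra hc
      push_neg at hc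
      exact hne (le_antisymm (mono hm) fun x hx => hc m x hm hx)
    choose m u hm hu hu' using key
    -- cluster point of u
    obtain ⟨z, -, hz⟩ := isCompact_univ.exists_clusterPt
      (f := Filter.map u Filter.atTop) (Filter.le_principal_iff.mpr Filter.univ_mem)
    have hzC : ∀ N, z ∈ C N := by
      intro N
      have hmem : C N ∈ Filter.map u Filter.atTop := by
        refine Filter.mem_map.mpr (Filter.mem_of_superset (Filter.mem_atTop N) ?_)
        intro k hk
        exact mono hk (hu k)
      have : z ∈ closure (C N) :=
        mem_closure_iff_clusterPt.mpr (hz.mono (Filter.le_principal_iff.mpr hmem))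
      rwa [(hC N).1.closure_eq] at this
    have hnhds : {y : X | y ≤ z} ∈ nhds z := (hKopen z).mem_nhds le_rfl
    obtain ⟨w, hw1, hw2⟩ := clusterPt_iff_nonempty.mp hz hnhds (Filter.range_mem_map (f := Filter.atTop))
    obtain ⟨k, rfl⟩ := hw2
    exact hu' k ((hC (m k)).2 hw1 (hzC (m k)))
end

section
/- Let R be a commutative ring with unit. The set Id(R) of proper ideals of R, endowed with the Zariski topology generated by the sets {𝔄 ∈ Id(R) : f ∉ 𝔄} for f ∈ R, is quasi-compact, and the constructible topology on Id(R) is finer than this Zariski topology. -/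
open Set

/-- The set `Id(R)` of proper ideals of `R`. -/
def ProperIdeal (R : Type*) [CommRing R] : Type _ := {I : Ideal R // I ≠ ⊤}

/-- The characteristic-function embedding `Id(R) → {0,1}^R`. -/
noncomputable def idealChi (R : Type*) [CommRing R] : ProperIdeal R → (R → Bool) :=
  fun I a => @decide (a ∈ I.1) (Classical.propDecidable _)

/-- The constructible topology on `Id(R)`: the topology induced from the product
topology on `{0,1}^R` via characteristic functions. -/
noncomputable def conTop (R : Type*) [CommRing R] : TopologicalSpace (ProperIdeal R) :=
  TopologicalSpace.induced (idealChi R) inferInstance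

/-- The Zariski topology on `Id(R)`, generated by the sets `{𝔄 : f ∉ 𝔄}`, `f ∈ R`. -/
def zarTop (R : Type*) [CommRing R] : TopologicalSpace (ProperIdeal R) :=
  TopologicalSpace.generateFrom {s : Set (ProperIdeal R) | ∃ f : R, s = {I | f ∉ I.1}}

lemma mem_range_idealChi_iff {R : Type*} [CommRing R] (χ : R → Bool) :
    χ ∈ Set.range (idealChi R) ↔
      χ 1 = false ∧ χ 0 = true ∧
      (∀ a b, χ a = true → χ b = true → χ (a + b) = true) ∧
      (∀ r a, χ a = true → χ (r * a) = true) := by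
  constructor
  · rintro ⟨I, rfl⟩
    refine ⟨?_, ?_, ?_, ?_⟩ <;>
      simp only [idealChi, decide_eq_true_eq, decide_eq_false_iff_not]
    · exact fun h => I.2 ((Ideal.eq_top_iff_one _).mpr h)
    · exact I.1.zero_mem
    · exact fun a b ha hb => I.1.add_mem ha hb
    · exact fun r a ha => I.1.mul_mem_left r ha
  · rintro ⟨h1, h0, hadd, hmul⟩
    let I : Ideal R :=
      { carrier := setOf (fun a => χ a = true)
        add_mem' := fun ha hb => hadd _ _ ha hb
        zero_mem' := h0
        smul_mem' := fun r a ha => hmul r a ha }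
    have hI : I ≠ ⊤ := by
      intro htop
      have h : χ 1 = true := (Ideal.eq_top_iff_one _).mp htop
      rw [h1] at h; exact absurd h (by simp)
    refine ⟨⟨I, hI⟩, ?_⟩
    funext a
    have hd : idealChi R ⟨I, hI⟩ a = @decide (χ a = true) (Classical.propDecidable _) := rfl
    rw [hd]
    cases h : χ a <;> simp [h]

/-- `Id(R)` with the Zariski topology is quasi-compact, and the constructible topology
is finer than the Zariski topology. -/
theorem stmt12 (R : Type*) [CommRing R] :
    @CompactSpace (ProperIdeal R) (zarTop R) ∧ conTop R ≤ zarTop R := by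
  have hle : conTop R ≤ zarTop R := by
    rw [zarTop, TopologicalSpace.le_generateFrom_iff_subset_isOpen]
    rintro s ⟨f, rfl⟩
    letI := conTop R
    have h1 : {I : ProperIdeal R | f ∉ I.1} = idealChi R ⁻¹' {χ | χ f = false} := by
      ext I
      simp [idealChi, decide_eq_false_iff_not]
    have h2 : {χ : R → Bool | χ f = false} = (fun χ : R → Bool => χ f) ⁻¹' {false} := rfl
    rw [h1, h2]
    exact isOpen_induced ((isOpen_discrete ({false} : Set Bool)).preimage (continuous_apply f))
  have hclosed : IsClosed (Set.range (idealChi R)) := by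
    have : Set.range (idealChi R) =
        {χ : R → Bool | χ 1 = false} ∩ {χ | χ 0 = true} ∩
        (⋂ a, ⋂ b, ({χ : R → Bool | χ a = true}ᶜ ∪ {χ | χ b = true}ᶜ ∪ {χ | χ (a + b) = true})) ∩
        (⋂ r, ⋂ a, ({χ : R → Bool | χ a = true}ᶜ ∪ {χ | χ (r * a) = true})) := by
      ext χ
      rw [mem_range_idealChi_iff]
      simp only [Set.mem_inter_iff, Set.mem_setOf_eq, Set.mem_iInter, Set.mem_union,
        Set.mem_compl_iff]
      constructor
      · rintro ⟨h1, h0, hadd, hmul⟩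
        refine ⟨⟨⟨h1, h0⟩, ?_⟩, ?_⟩
        · intro a b
          by_cases ha : χ a = true
          · by_cases hb : χ b = true
            · exact Or.inr (hadd a b ha hb)
            · exact Or.inl (Or.inr hb)
          · exact Or.inl (Or.inl ha)
        · intro r a
          by_cases ha : χ a = true
          · exact Or.inr (hmul r a ha)
          · exact Or.inl ha
      · rintro ⟨⟨⟨h1, h0⟩, hadd⟩, hmul⟩
        refine ⟨h1, h0, ?_, ?_⟩
        · intro a b ha hb
          rcases hadd a b with (h | h) | h
          · exact absurd ha h
          · exact absurd hb h
          · exact h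
        · intro r a ha
          rcases hmul r a with h | h
          · exact absurd ha h
          · exact h
    rw [this]
    have key : ∀ (c : R) (v : Bool), IsClosed {χ : R → Bool | χ c = v} := fun c v => by
      have h : {χ : R → Bool | χ c = v} = (fun χ : R → Bool => χ c) ⁻¹' {v} := rfl
      rw [h]; exact (isClosed_discrete {v}).preimage (continuous_apply c)
    have keyc : ∀ (c : R), IsClosed {χ : R → Bool | χ c = true}ᶜ := fun c => by
      have : {χ : R → Bool | χ c = true}ᶜ = {χ : R → Bool | χ c = false} := by
        ext χ; simp
      rw [this]; exact key c false
    refine (((key 1 false).inter (key 0 true)).inter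
      (isClosed_iInter fun a => isClosed_iInter fun b =>
        (((keyc a).union (keyc b)).union (key _ true)))).inter
      (isClosed_iInter fun r => isClosed_iInter fun a => (keyc a).union (key _ true))
  have hcomC : @CompactSpace (ProperIdeal R) (conTop R) := by
    letI := conTop R
    have hind : Topology.IsInducing (idealChi R) := ⟨rfl⟩
    have hinj : Function.Injective (idealChi R) := by
      intro I J h
      have : ∀ a : R, a ∈ I.1 ↔ a ∈ J.1 := by
        intro a
        have := congrFun h a
        simp only [idealChi, decide_eq_decide] at this
        exact this
      exact Subtype.ext (Ideal.ext this)
    have hemb : Topology.IsEmbedding (idealChi R) := ⟨hind, hinj⟩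
    constructor
    rw [hemb.isCompact_iff, Set.image_univ]
    exact hclosed.isCompact
  refine ⟨?_, hle⟩
  have hcont : @Continuous _ _ (conTop R) (zarTop R) id :=
    (@continuous_id_iff_le _ (conTop R) (zarTop R)).mpr hle
  have h1 := @isCompact_univ _ (conTop R) hcomC
  have h2 : @IsCompact _ (zarTop R) (id '' Set.univ) :=
    @IsCompact.image _ _ (conTop R) (zarTop R) _ _ h1 hcont
  rw [Set.image_id] at h2
  exact @CompactSpace.mk _ (zarTop R) h2
end

section
/- Let R be a Noetherian commutative ring with unit. Then Id(R), the set of proper ideals of R ordered by reverse inclusion (𝔄 ≤ 𝔅 iff 𝔅 ⊆ 𝔄) and endowed with the constructible topology, is a Noetherian Priestley space; moreover its constructible topology coincides with the topology τ_≤ generated by the principal down-sets K_𝔄 = {𝔅 : 𝔄 ⊆ 𝔅} and their complements. -/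
open Set

/-- The topology `τ_≤` generated by the principal down-sets
`K_𝔄 = {𝔅 : 𝔄 ⊆ 𝔅}` (for the order `𝔄 ≤ 𝔅 ↔ 𝔅 ⊆ 𝔄` of reverse inclusion)
and their complements. -/
def tauLE (R : Type*) [CommRing R] : TopologicalSpace (ProperIdeal R) :=
  TopologicalSpace.generateFrom
    {s : Set (ProperIdeal R) | ∃ A : ProperIdeal R,
      s = {B | A.1 ≤ B.1} ∨ s = {B | A.1 ≤ B.1}ᶜ}

/-- A set of proper ideals is a down-set for the reverse-inclusion order iff it is
closed under passing to larger ideals. -/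
def IsIdealDownSet (R : Type*) [CommRing R] (U : Set (ProperIdeal R)) : Prop :=
  ∀ A ∈ U, ∀ B : ProperIdeal R, A.1 ≤ B.1 → B ∈ U

section Aux

variable {R : Type*} [CommRing R]

lemma memSet_eq (a : R) :
    {B : ProperIdeal R | a ∈ B.1} = idealChi R ⁻¹' {f | f a = true} := by
  ext B
  simp [idealChi]

lemma isClopen_memSet (a : R) :
    @IsClopen (ProperIdeal R) (conTop R) {B | a ∈ B.1} := by
  letI := conTop R
  have hcont : Continuous (idealChi R) := continuous_induced_dom
  have h : IsClopen {f : R → Bool | f a = true} := by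
    have he : {f : R → Bool | f a = true} = (fun f : R → Bool => f a) ⁻¹' {true} := rfl
    rw [he]
    exact (isClopen_discrete {true}).preimage (continuous_apply a)
  rw [memSet_eq]
  exact h.preimage hcont

lemma isClopen_K [IsNoetherianRing R] (A : ProperIdeal R) :
    @IsClopen (ProperIdeal R) (conTop R) {B : ProperIdeal R | A.1 ≤ B.1} := by
  letI := conTop R
  obtain ⟨s, hs⟩ := (IsNoetherian.noetherian A.1 : A.1.FG)
  have he : {B : ProperIdeal R | A.1 ≤ B.1} = ⋂ a ∈ s, {B : ProperIdeal R | a ∈ B.1} := by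
    ext B
    simp only [mem_setOf_eq, mem_iInter]
    constructor
    · intro h a ha
      exact h (hs ▸ Ideal.subset_span ha)
    · intro h
      rw [← hs]
      exact Submodule.span_le.mpr (fun a ha => h a ha)
  rw [he]
  exact isClopen_biInter_finset (fun a _ => isClopen_memSet a)

lemma range_idealChi :
    range (idealChi R) = {f : R → Bool | f 1 = false ∧ f 0 = true ∧
      (∀ a b : R, f a = true → f b = true → f (a + b) = true) ∧
      (∀ r a : R, f a = true → f (r * a) = true)} := by
  ext f
  constructor
  · rintro ⟨I, rfl⟩
    refine ⟨?_, ?_, ?_, ?_⟩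
    · simp only [idealChi, decide_eq_false_iff_not]
      exact (Ideal.ne_top_iff_one I.1).mp I.2
    · simp only [idealChi, decide_eq_true_eq]
      exact I.1.zero_mem
    · intro a b ha hb
      simp only [idealChi, decide_eq_true_eq] at *
      exact I.1.add_mem ha hb
    · intro r a ha
      simp only [idealChi, decide_eq_true_eq] at *
      exact I.1.mul_mem_left r ha
  · rintro ⟨h1, h0, hadd, hmul⟩
    refine ⟨⟨{ carrier := {a : R | f a = true}
               add_mem' := fun ha hb => hadd _ _ ha hb
               zero_mem' := h0
               smul_mem' := fun c x hx => by
                 simp only [smul_eq_mul]; exact hmul c x hx }, ?_⟩, ?_⟩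
    · intro htop
      have hm : f 1 = true := by
        have h' : (1 : R) ∈ (⊤ : Ideal R) := Submodule.mem_top
        rw [← htop] at h'
        exact h'
      rw [h1] at hm
      exact Bool.false_ne_true hm
    · funext a
      simp only [idealChi]
      by_cases h : f a = true
      · simp only [h, decide_eq_true_eq]; exact h
      · have hf : f a = false := by
          cases hfa : f a
          · rfl
          · exact absurd hfa h
        rw [hf]
        simp only [decide_eq_false_iff_not]
        exact fun hm => h hm

lemma isClosed_range_idealChi : IsClosed (range (idealChi R)) := by
  rw [range_idealChi]
  have hE : ∀ a : R, IsClopen {f : R → Bool | f a = true} := by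
    intro a
    exact (isClopen_discrete {true}).preimage (continuous_apply a)
  have h1 : IsClosed {f : R → Bool | f 1 = false} := by
    have : {f : R → Bool | f 1 = false} = (fun f : R → Bool => f 1) ⁻¹' {false} := rfl
    rw [this]
    exact (isClosed_discrete {false}).preimage (continuous_apply 1)
  have h0 : IsClosed {f : R → Bool | f 0 = true} := (hE 0).isClosed
  have h3 : IsClosed {f : R → Bool |
      ∀ a b : R, f a = true → f b = true → f (a + b) = true} := by
    have he : {f : R → Bool | ∀ a b : R, f a = true → f b = true → f (a + b) = true}
        = ⋂ (a : R) (b : R),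
          ({f : R → Bool | f a = true}ᶜ ∪ {f : R → Bool | f b = true}ᶜ
            ∪ {f : R → Bool | f (a + b) = true}) := by
      ext f
      simp only [mem_setOf_eq, mem_iInter, mem_union, mem_compl_iff]
      constructor
      · intro h a b
        by_cases ha : f a = true
        · by_cases hb : f b = true
          · exact Or.inr (h a b ha hb)
          · exact Or.inl (Or.inr hb)
        · exact Or.inl (Or.inl ha)
      · intro h a b ha hb
        rcases h a b with (hc | hc) | hc
        · exact absurd ha hc
        · exact absurd hb hc
        · exact hc
    rw [he]
    exact isClosed_iInter fun a => isClosed_iInter fun b =>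
      (((hE a).compl.isClosed.union (hE b).compl.isClosed).union (hE (a + b)).isClosed)
  have h4 : IsClosed {f : R → Bool | ∀ r a : R, f a = true → f (r * a) = true} := by
    have he : {f : R → Bool | ∀ r a : R, f a = true → f (r * a) = true}
        = ⋂ (r : R) (a : R),
          ({f : R → Bool | f a = true}ᶜ ∪ {f : R → Bool | f (r * a) = true}) := by
      ext f
      simp only [mem_setOf_eq, mem_iInter, mem_union, mem_compl_iff]
      constructor
      · intro h r a
        by_cases ha : f a = true
        · exact Or.inr (h r a ha)
        · exact Or.inl ha
      · intro h r a ha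
        rcases h r a with hc | hc
        · exact absurd ha hc
        · exact hc
    rw [he]
    exact isClosed_iInter fun r => isClosed_iInter fun a =>
      ((hE a).compl.isClosed.union (hE (r * a)).isClosed)
  have he : {f : R → Bool | f 1 = false ∧ f 0 = true ∧
      (∀ a b : R, f a = true → f b = true → f (a + b) = true) ∧
      (∀ r a : R, f a = true → f (r * a) = true)}
      = {f : R → Bool | f 1 = false} ∩ ({f : R → Bool | f 0 = true} ∩
        ({f : R → Bool | ∀ a b : R, f a = true → f b = true → f (a + b) = true} ∩
         {f : R → Bool | ∀ r a : R, f a = true → f (r * a) = true})) := by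
    ext f
    simp only [mem_setOf_eq, mem_inter_iff]
  rw [he]
  exact h1.inter (h0.inter (h3.inter h4))

lemma inducing_idealChi : @Topology.IsInducing _ _ (conTop R) _ (idealChi R) := by
  letI := conTop R
  exact ⟨rfl⟩

lemma compactSpace_conTop : @CompactSpace (ProperIdeal R) (conTop R) := by
  letI := conTop R
  constructor
  rw [(inducing_idealChi (R := R)).isCompact_iff, image_univ]
  exact (isClosed_range_idealChi (R := R)).isCompact

lemma conTop_eq_tauLE [IsNoetherianRing R] : conTop R = tauLE R := by
  refine le_antisymm ?_ ?_
  · -- conTop ≤ tauLE : every generator of tauLE is conTop-open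
    letI := conTop R
    apply le_generateFrom
    rintro s ⟨A, (rfl | rfl)⟩
    · exact (isClopen_K A).isOpen
    · exact (isClopen_K A).compl.isOpen
  · -- tauLE ≤ conTop : idealChi is tauLE-continuous
    have hcont : @Continuous _ _ (tauLE R) _ (idealChi R) := by
      letI := tauLE R
      apply continuous_pi
      intro a
      rw [continuous_discrete_rng]
      have htrue : (fun B : ProperIdeal R => idealChi R B a) ⁻¹' {true}
          = {B : ProperIdeal R | a ∈ B.1} := by
        ext B
        simp [idealChi]
      have hopen : IsOpen {B : ProperIdeal R | a ∈ B.1} := by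
        by_cases h : Ideal.span {a} = (⊤ : Ideal R)
        · have : {B : ProperIdeal R | a ∈ B.1} = (∅ : Set (ProperIdeal R)) := by
            ext B
            simp only [mem_setOf_eq, mem_empty_iff_false, iff_false]
            intro hm
            apply B.2
            have hle : Ideal.span {a} ≤ B.1 :=
              Submodule.span_le.mpr (singleton_subset_iff.mpr hm)
            exact top_le_iff.mp ((le_of_eq h.symm).trans hle)
          rw [this]
          exact isOpen_empty
        · have he : {B : ProperIdeal R | a ∈ B.1}
              = {B : ProperIdeal R | (⟨Ideal.span {a}, h⟩ : ProperIdeal R).1 ≤ B.1} := by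
            ext B
            simp only [mem_setOf_eq, Ideal.span_le, singleton_subset_iff]
            rfl
          rw [he]
          exact TopologicalSpace.isOpen_generateFrom_of_mem ⟨⟨Ideal.span {a}, h⟩, Or.inl rfl⟩
      intro b
      cases b
      · have hfalse : (fun B : ProperIdeal R => idealChi R B a) ⁻¹' {false}
            = {B : ProperIdeal R | a ∈ B.1}ᶜ := by
          rw [← htrue]
          ext B
          simp
        rw [hfalse]
        by_cases h : Ideal.span {a} = (⊤ : Ideal R)
        · have : {B : ProperIdeal R | a ∈ B.1} = (∅ : Set (ProperIdeal R)) := by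
            ext B
            simp only [mem_setOf_eq, mem_empty_iff_false, iff_false]
            intro hm
            apply B.2
            have hle : Ideal.span {a} ≤ B.1 :=
              Submodule.span_le.mpr (singleton_subset_iff.mpr hm)
            exact top_le_iff.mp ((le_of_eq h.symm).trans hle)
          rw [this, compl_empty]
          exact isOpen_univ
        · have he : {B : ProperIdeal R | a ∈ B.1}
              = {B : ProperIdeal R | (⟨Ideal.span {a}, h⟩ : ProperIdeal R).1 ≤ B.1} := by
            ext B
            simp only [mem_setOf_eq, Ideal.span_le, singleton_subset_iff]
            rfl
          rw [he]
          exact TopologicalSpace.isOpen_generateFrom_of_mem ⟨⟨Ideal.span {a}, h⟩, Or.inr rfl⟩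
      · rw [htrue]
        exact hopen
    exact continuous_iff_le_induced.mp hcont

/-- A `conTop`-closed down-set is open (in fact, a union of principal down-sets). -/
lemma isOpen_of_closed_downset [IsNoetherianRing R] {C : Set (ProperIdeal R)}
    (hd : IsIdealDownSet R C) : @IsOpen _ (conTop R) C := by
  letI := conTop R
  have he : C = ⋃ B ∈ C, {B' : ProperIdeal R | B.1 ≤ B'.1} := by
    apply subset_antisymm
    · intro B hB
      exact mem_biUnion hB (le_refl B.1)
    · intro B' hB'
      simp only [mem_iUnion] at hB'
      obtain ⟨B, hB, hle⟩ := hB'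
      exact hd B hB B' hle
  rw [he]
  exact isOpen_biUnion fun B _ => (isClopen_K B).isOpen

end Aux

/-- For a Noetherian commutative ring `R`, the space `Id(R)` of proper ideals, ordered
by reverse inclusion and endowed with the constructible topology, is a Noetherian
Priestley space, and its constructible topology coincides with `τ_≤`. -/
theorem stmt13 (R : Type*) [CommRing R] [IsNoetherianRing R] :
    conTop R = tauLE R ∧
    @CompactSpace (ProperIdeal R) (conTop R) ∧
    (∀ x y : ProperIdeal R, ¬ x.1 ≤ y.1 →
      ∃ U : Set (ProperIdeal R), @IsClopen (ProperIdeal R) (conTop R) U ∧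
        IsIdealDownSet R U ∧ x ∈ U ∧ y ∉ U) ∧
    (∀ C : ℕ → Set (ProperIdeal R),
      (∀ n, @IsClosed (ProperIdeal R) (conTop R) (C n) ∧ IsIdealDownSet R (C n)) →
      (∀ n, C (n + 1) ⊆ C n) → ∃ N, ∀ n ≥ N, C n = C N) := by
  refine ⟨conTop_eq_tauLE, compactSpace_conTop, ?_, ?_⟩
  · -- Priestley separation
    intro x y hxy
    refine ⟨{B : ProperIdeal R | x.1 ≤ B.1}, isClopen_K x, ?_, le_refl x.1, hxy⟩
    intro A hA B hAB
    exact le_trans hA hAB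
  · -- Noetherian-ness
    intro C hC hdec
    letI := conTop R
    haveI : CompactSpace (ProperIdeal R) := compactSpace_conTop
    set D := ⋂ n, C n with hD
    have hDdown : IsIdealDownSet R D := by
      intro A hA B hAB
      rw [hD, mem_iInter] at *
      exact fun n => (hC n).2 A (hA n) B hAB
    have hDopen : IsOpen D := isOpen_of_closed_downset hDdown
    have hmono : ∀ m n, m ≤ n → C n ⊆ C m := by
      intro m n h
      induction h with
      | refl => exact subset_rfl
      | step h ih => exact fun _ hx => ih (hdec _ hx)
    have key : ∃ N, C N ⊆ D := by
      by_contra h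
      push_neg at h
      have hne : ∀ n, (C n ∩ Dᶜ).Nonempty := by
        intro n
        obtain ⟨x, hx, hx'⟩ := not_subset.mp (h n)
        exact ⟨x, hx, hx'⟩
      have hsub : ∀ n, C (n + 1) ∩ Dᶜ ⊆ C n ∩ Dᶜ :=
        fun n => inter_subset_inter_left _ (hdec n)
      have hcl : ∀ n, IsClosed (C n ∩ Dᶜ) :=
        fun n => (hC n).1.inter hDopen.isClosed_compl
      have hcomp : IsCompact (C 0 ∩ Dᶜ) := (hcl 0).isCompact
      have hnon := IsCompact.nonempty_iInter_of_sequence_nonempty_isCompact_isClosed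
        (fun n => C n ∩ Dᶜ) hsub hne hcomp hcl
      obtain ⟨x, hx⟩ := hnon
      rw [mem_iInter] at hx
      have hxD : x ∈ D := by
        rw [hD, mem_iInter]
        exact fun n => (hx n).1
      exact (hx 0).2 hxD
    obtain ⟨N, hN⟩ := key
    refine ⟨N, fun n hn => subset_antisymm (hmono N n hn) ?_⟩
    intro x hx
    exact (mem_iInter.mp (hN hx)) n
end

section
/- Let A be a strictly k-affinoid algebra over a complete non-Archimedean field k, with spectral seminorm ρ. For x in the Berkovich spectrum ℳ(A) and 0 < ε ≤ 1, the set 𝔄_ε(x) = {a ∈ A° : |a(x)| < ε} (taken modulo {ρ < ε}) is a primary ideal of A_ε = A°/{ρ < ε}. -/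
open Set

/-- Abstract version of: for a (reduced) strictly `k`-affinoid algebra `A` with spectral
seminorm `ρ` and a point `x ∈ ℳ(A)` (a bounded multiplicative seminorm, so dominated by
the spectral seminorm `ρ = ‖·‖_sup`), and `0 < ε ≤ 1`, the image of the ideal
`𝔄_ε(x) = {a ∈ A° : |a(x)| < ε}` in `A_ε = A°/{ρ < ε}` is a primary ideal.

Here `O = A° = {ρ ≤ 1}` is the subring of power-bounded elements, `J` is the ideal
`{a ∈ A° : ρ(a) < ε}` and `I = {a ∈ A° : |a(x)| < ε}`; the conclusion states that the
image of `I` in the quotient `A°/J` is primary. -/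
theorem stmt19 {A : Type*} [CommRing A]
    (ρ : A → ℝ) (hρ0 : ∀ a, 0 ≤ ρ a) (hρ1 : ρ 1 = 1)
    (hρadd : ∀ a b, ρ (a + b) ≤ max (ρ a) (ρ b))
    (hρneg : ∀ a, ρ (-a) = ρ a)
    (hρmul : ∀ a b, ρ (a * b) ≤ ρ a * ρ b)
    (hρpow : ∀ (a : A) (n : ℕ), ρ (a ^ n) = ρ a ^ n)
    (x : A → ℝ) (hx0 : ∀ a, 0 ≤ x a) (hx1 : x 1 = 1)
    (hxadd : ∀ a b, x (a + b) ≤ max (x a) (x b))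
    (hxmul : ∀ a b, x (a * b) = x a * x b)
    (hxρ : ∀ a, x a ≤ ρ a)
    (ε : ℝ) (hε0 : 0 < ε) (hε1 : ε ≤ 1)
    (O : Subring A) (hO : ∀ a : A, a ∈ O ↔ ρ a ≤ 1)
    (J : Ideal O) (hJ : ∀ a : O, a ∈ J ↔ ρ (a : A) < ε)
    (I : Ideal O) (hI : ∀ a : O, a ∈ I ↔ x (a : A) < ε) :
    (Ideal.map (Ideal.Quotient.mk J) I).IsPrimary := by
  have hJI : J ≤ I := fun a ha => (hI a).2 (lt_of_le_of_lt (hxρ a) ((hJ a).1 ha))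
  have hxpow : ∀ (c : A) (n : ℕ), x (c ^ n) = x c ^ n := by
    intro c n
    induction n with
    | zero => simp [hx1]
    | succ k ih => rw [pow_succ, hxmul, ih, pow_succ]
  rw [Ideal.isPrimary_iff]
  have hmem : ∀ a : O, Ideal.Quotient.mk J a ∈ Ideal.map (Ideal.Quotient.mk J) I ↔ a ∈ I := by
    intro a
    constructor
    · intro h
      obtain ⟨b, hb, hba⟩ :=
        Ideal.mem_image_of_mem_map_of_surjective _ Ideal.Quotient.mk_surjective h
      have hba' : b - a ∈ J := Ideal.Quotient.eq.mp hba
      have : a = b - (b - a) := by ring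
      rw [this]
      exact I.sub_mem hb (hJI hba')
    · intro h
      exact Ideal.mem_map_of_mem _ h
  constructor
  · intro htop
    have h1 : (1 : O ⧸ J) ∈ Ideal.map (Ideal.Quotient.mk J) I := htop ▸ trivial
    have h2 := (hI 1).1 ((hmem 1).1 (by simpa using h1))
    rw [OneMemClass.coe_one, hx1] at h2
    linarith
  · intro y z hyz
    obtain ⟨a, rfl⟩ := Ideal.Quotient.mk_surjective y
    obtain ⟨b, rfl⟩ := Ideal.Quotient.mk_surjective z
    have hab : a * b ∈ I := (hmem (a * b)).1 (by rw [map_mul]; exact hyz)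
    have hab' : x ((a : A) * b) < ε := by
      have := (hI (a * b)).1 hab
      simpa using this
    by_cases ha : x (a : A) < ε
    · exact Or.inl ((hmem a).2 ((hI a).2 ha))
    · right
      push_neg at ha
      have hapos : 0 < x (a : A) := lt_of_lt_of_le hε0 ha
      have hb1 : x (b : A) < 1 := by
        rw [hxmul] at hab'
        by_contra hb
        push_neg at hb
        have : x (a : A) * 1 ≤ x (a : A) * x (b : A) :=
          mul_le_mul_of_nonneg_left hb (le_of_lt hapos)
        nlinarith
      obtain ⟨n, hn⟩ := exists_pow_lt_of_lt_one hε0 hb1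
      have hbn : b ^ n ∈ I := by
        rw [hI]
        have : ((b ^ n : O) : A) = (b : A) ^ n := by push_cast; ring
        rw [this, hxpow]
        exact hn
      rw [Ideal.mem_radical_iff]
      exact ⟨n, by rw [← map_pow]; exact (hmem (b ^ n)).2 hbn⟩
end
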